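/- arXiv:2311.15871 — 2 statements merged into one kernel-verified Lean document; each statement's English description precedes it below -/
import Mathlib

section
/- Suppose Z is independent of Y0 and of Y1, Condition S0 holds, and 0 < p(z_ℓ) < 1 for every ℓ. Let γ and γ̃ belong to Γ₀, the set of vectors (γ_1,...,γ_L) ∈ ℝ^L with Σ_ℓ γ_ℓ = 0 and Σ_ℓ γ_ℓ (1−p(z_ℓ)) = 1, and suppose for every y ∈ ℝ: P[Y ≤ y | D=0] ≤ Σ_{ℓ=1}^L γ_ℓ P[Y ≤ y, D=0 | Z=z_ℓ] and Σ_{ℓ=1}^L γ̃_ℓ P[Y ≤ y, D=0 | Z=z_ℓ] ≤ P[Y ≤ y | D=0]. Then for every y ∈ ℝ: −Σ_{ℓ=1}^L γ̃_ℓ P[Y ≤ y, D=1 | Z=z_ℓ] ≤ P[Y1 ≤ y | D=0] ≤ −Σ_{ℓ=1}^L γ_ℓ P[Y ≤ y, D=1 | Z=z_ℓ]. -/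
open MeasureTheory ProbabilityTheory Filter Set

/-- Probability of an event. -/
noncomputable def pr {Ω : Type*} [MeasurableSpace Ω] (μ : Measure Ω) (s : Set Ω) : ℝ :=
  (μ s).toReal

/-- Conditional probability `P[s | A]`. -/
noncomputable def cpr {Ω : Type*} [MeasurableSpace Ω] (μ : Measure Ω) (s A : Set Ω) : ℝ :=
  pr μ (s ∩ A) / pr μ A

lemma pr_nonneg {Ω : Type*} [MeasurableSpace Ω] (μ : Measure Ω) (s : Set Ω) : 0 ≤ pr μ s :=
  ENNReal.toReal_nonneg

lemma pr_union_disj {Ω : Type*} [MeasurableSpace Ω] (μ : Measure Ω) [IsProbabilityMeasure μ]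
    {s t : Set Ω} (h : Disjoint s t) (ht : MeasurableSet t) :
    pr μ (s ∪ t) = pr μ s + pr μ t := by
  unfold pr
  rw [measure_union h ht, ENNReal.toReal_add (measure_ne_top μ s) (measure_ne_top μ t)]

lemma pr_partition {Ω : Type*} [MeasurableSpace Ω] (μ : Measure Ω) [IsProbabilityMeasure μ]
    {L : ℕ} (Z : Ω → Fin L) (hmZ : Measurable Z) {S : Set Ω} (hS : MeasurableSet S) :
    pr μ S = ∑ ℓ : Fin L, pr μ (S ∩ {ω | Z ω = ℓ}) := by
  have h1 : S = ⋃ ℓ : Fin L, S ∩ {ω | Z ω = ℓ} := by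
    ext ω; simp
  have hd : Pairwise (Function.onFun Disjoint fun ℓ : Fin L => S ∩ {ω | Z ω = ℓ}) := by
    intro i j hij
    simp only [Function.onFun, Set.disjoint_left]
    rintro ω ⟨-, h1⟩ ⟨-, h2⟩
    exact hij (h1.symm.trans h2)
  have hm : ∀ ℓ : Fin L, MeasurableSet (S ∩ {ω | Z ω = ℓ}) :=
    fun ℓ => hS.inter (hmZ (measurableSet_singleton ℓ))
  rw [pr]
  conv_lhs => rw [h1]
  rw [measure_iUnion hd hm, tsum_fintype]
  exact ENNReal.toReal_sum fun _ _ => measure_ne_top μ _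

lemma transfer_ub {L : ℕ} (G0 G1 : Fin L → ℝ → ℝ)
    (S0 : ∀ w wt : Fin L → ℝ, (∀ ℓ, 0 ≤ w ℓ) → (∀ ℓ, 0 ≤ wt ℓ) →
      (∑ ℓ, w ℓ) = 1 → (∑ ℓ, wt ℓ) = 1 →
      (∀ y : ℝ, (∑ ℓ, w ℓ * G0 ℓ y) ≤ ∑ ℓ, wt ℓ * G0 ℓ y) →
      (∀ y : ℝ, (∑ ℓ, w ℓ * G1 ℓ y) ≤ ∑ ℓ, wt ℓ * G1 ℓ y))
    (w c : Fin L → ℝ) (hw0 : ∀ ℓ, 0 ≤ w ℓ) (hw1 : (∑ ℓ, w ℓ) = 1) (hc1 : (∑ ℓ, c ℓ) = 1)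
    (h : ∀ y, (∑ ℓ, w ℓ * G0 ℓ y) ≤ ∑ ℓ, c ℓ * G0 ℓ y) :
    ∀ y, (∑ ℓ, w ℓ * G1 ℓ y) ≤ ∑ ℓ, c ℓ * G1 ℓ y := by
  set a : Fin L → ℝ := fun ℓ => max (c ℓ) 0 with ha
  set b : Fin L → ℝ := fun ℓ => max (-c ℓ) 0 with hb
  have hab : ∀ ℓ, c ℓ = a ℓ - b ℓ := by
    intro ℓ; simp only [ha, hb]
    rcases le_total (c ℓ) 0 with h' | h'
    · rw [max_eq_right h', max_eq_left (neg_nonneg.mpr h')]; ring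
    · rw [max_eq_left h', max_eq_right (neg_nonpos.mpr h')]; ring
  have ha0 : ∀ ℓ, 0 ≤ a ℓ := fun ℓ => le_max_right _ _
  have hb0 : ∀ ℓ, 0 ≤ b ℓ := fun ℓ => le_max_right _ _
  have hbs : 0 ≤ ∑ ℓ, b ℓ := Finset.sum_nonneg fun ℓ _ => hb0 ℓ
  have hs : (∑ ℓ, a ℓ) = 1 + ∑ ℓ, b ℓ := by
    have h2 : (∑ ℓ, a ℓ) - (∑ ℓ, b ℓ) = 1 := by
      rw [← Finset.sum_sub_distrib, ← hc1]
      exact Finset.sum_congr rfl fun ℓ _ => (hab ℓ).symm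
    linarith
  set s : ℝ := 1 + ∑ ℓ, b ℓ with hsdef
  have hspos : 0 < s := by positivity
  have e1 : ∀ (G : Fin L → ℝ), (∑ ℓ, ((w ℓ + b ℓ) / s) * G ℓ)
      = ((∑ ℓ, w ℓ * G ℓ) + ∑ ℓ, b ℓ * G ℓ) / s := by
    intro G
    rw [← Finset.sum_add_distrib, Finset.sum_div]
    exact Finset.sum_congr rfl fun ℓ _ => by ring
  have e2 : ∀ (G : Fin L → ℝ), (∑ ℓ, (a ℓ / s) * G ℓ) = (∑ ℓ, a ℓ * G ℓ) / s := by
    intro G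
    rw [Finset.sum_div]
    exact Finset.sum_congr rfl fun ℓ _ => by ring
  have e3 : ∀ (G : Fin L → ℝ), (∑ ℓ, c ℓ * G ℓ) = (∑ ℓ, a ℓ * G ℓ) - ∑ ℓ, b ℓ * G ℓ := by
    intro G
    rw [← Finset.sum_sub_distrib]
    exact Finset.sum_congr rfl fun ℓ _ => by rw [hab ℓ]; ring
  have key := S0 (fun ℓ => (w ℓ + b ℓ) / s) (fun ℓ => a ℓ / s)
    (fun ℓ => div_nonneg (add_nonneg (hw0 ℓ) (hb0 ℓ)) hspos.le)
    (fun ℓ => div_nonneg (ha0 ℓ) hspos.le)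
    (by rw [show (∑ ℓ, (w ℓ + b ℓ) / s) = ((∑ ℓ, w ℓ) + ∑ ℓ, b ℓ) / s by
          rw [← Finset.sum_add_distrib, Finset.sum_div], hw1, div_self hspos.ne'])
    (by rw [show (∑ ℓ, a ℓ / s) = (∑ ℓ, a ℓ) / s from (Finset.sum_div ..).symm, hs,
          div_self hspos.ne'])
    (by intro y
        rw [e1 (fun ℓ => G0 ℓ y), e2 (fun ℓ => G0 ℓ y)]
        apply (div_le_div_iff_of_pos_right hspos).mpr
        have := h y
        rw [e3 (fun ℓ => G0 ℓ y)] at this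
        linarith)
  intro y
  have hky := key y
  rw [e1 (fun ℓ => G1 ℓ y), e2 (fun ℓ => G1 ℓ y)] at hky
  rw [e3 (fun ℓ => G1 ℓ y)]
  linarith [(div_le_div_iff_of_pos_right hspos).mp hky]

lemma transfer_lb {L : ℕ} (G0 G1 : Fin L → ℝ → ℝ)
    (S0 : ∀ w wt : Fin L → ℝ, (∀ ℓ, 0 ≤ w ℓ) → (∀ ℓ, 0 ≤ wt ℓ) →
      (∑ ℓ, w ℓ) = 1 → (∑ ℓ, wt ℓ) = 1 →
      (∀ y : ℝ, (∑ ℓ, w ℓ * G0 ℓ y) ≤ ∑ ℓ, wt ℓ * G0 ℓ y) →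
      (∀ y : ℝ, (∑ ℓ, w ℓ * G1 ℓ y) ≤ ∑ ℓ, wt ℓ * G1 ℓ y))
    (w c : Fin L → ℝ) (hw0 : ∀ ℓ, 0 ≤ w ℓ) (hw1 : (∑ ℓ, w ℓ) = 1) (hc1 : (∑ ℓ, c ℓ) = 1)
    (h : ∀ y, (∑ ℓ, c ℓ * G0 ℓ y) ≤ ∑ ℓ, w ℓ * G0 ℓ y) :
    ∀ y, (∑ ℓ, c ℓ * G1 ℓ y) ≤ ∑ ℓ, w ℓ * G1 ℓ y := by
  set a : Fin L → ℝ := fun ℓ => max (c ℓ) 0 with ha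
  set b : Fin L → ℝ := fun ℓ => max (-c ℓ) 0 with hb
  have hab : ∀ ℓ, c ℓ = a ℓ - b ℓ := by
    intro ℓ; simp only [ha, hb]
    rcases le_total (c ℓ) 0 with h' | h'
    · rw [max_eq_right h', max_eq_left (neg_nonneg.mpr h')]; ring
    · rw [max_eq_left h', max_eq_right (neg_nonpos.mpr h')]; ring
  have ha0 : ∀ ℓ, 0 ≤ a ℓ := fun ℓ => le_max_right _ _
  have hb0 : ∀ ℓ, 0 ≤ b ℓ := fun ℓ => le_max_right _ _
  have hbs : 0 ≤ ∑ ℓ, b ℓ := Finset.sum_nonneg fun ℓ _ => hb0 ℓ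
  have hs : (∑ ℓ, a ℓ) = 1 + ∑ ℓ, b ℓ := by
    have h2 : (∑ ℓ, a ℓ) - (∑ ℓ, b ℓ) = 1 := by
      rw [← Finset.sum_sub_distrib, ← hc1]
      exact Finset.sum_congr rfl fun ℓ _ => (hab ℓ).symm
    linarith
  set s : ℝ := 1 + ∑ ℓ, b ℓ with hsdef
  have hspos : 0 < s := by positivity
  have e1 : ∀ (G : Fin L → ℝ), (∑ ℓ, ((w ℓ + b ℓ) / s) * G ℓ)
      = ((∑ ℓ, w ℓ * G ℓ) + ∑ ℓ, b ℓ * G ℓ) / s := by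
    intro G
    rw [← Finset.sum_add_distrib, Finset.sum_div]
    exact Finset.sum_congr rfl fun ℓ _ => by ring
  have e2 : ∀ (G : Fin L → ℝ), (∑ ℓ, (a ℓ / s) * G ℓ) = (∑ ℓ, a ℓ * G ℓ) / s := by
    intro G
    rw [Finset.sum_div]
    exact Finset.sum_congr rfl fun ℓ _ => by ring
  have e3 : ∀ (G : Fin L → ℝ), (∑ ℓ, c ℓ * G ℓ) = (∑ ℓ, a ℓ * G ℓ) - ∑ ℓ, b ℓ * G ℓ := by
    intro G
    rw [← Finset.sum_sub_distrib]
    exact Finset.sum_congr rfl fun ℓ _ => by rw [hab ℓ]; ring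
  have key := S0 (fun ℓ => a ℓ / s) (fun ℓ => (w ℓ + b ℓ) / s)
    (fun ℓ => div_nonneg (ha0 ℓ) hspos.le)
    (fun ℓ => div_nonneg (add_nonneg (hw0 ℓ) (hb0 ℓ)) hspos.le)
    (by rw [show (∑ ℓ, a ℓ / s) = (∑ ℓ, a ℓ) / s from (Finset.sum_div ..).symm, hs,
          div_self hspos.ne'])
    (by rw [show (∑ ℓ, (w ℓ + b ℓ) / s) = ((∑ ℓ, w ℓ) + ∑ ℓ, b ℓ) / s by
          rw [← Finset.sum_add_distrib, Finset.sum_div], hw1, div_self hspos.ne'])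
    (by intro y
        rw [e1 (fun ℓ => G0 ℓ y), e2 (fun ℓ => G0 ℓ y)]
        apply (div_le_div_iff_of_pos_right hspos).mpr
        have := h y
        rw [e3 (fun ℓ => G0 ℓ y)] at this
        linarith)
  intro y
  have hky := key y
  rw [e1 (fun ℓ => G1 ℓ y), e2 (fun ℓ => G1 ℓ y)] at hky
  rw [e3 (fun ℓ => G1 ℓ y)]
  linarith [(div_le_div_iff_of_pos_right hspos).mp hky]

/-- Theorem 2 (bounds on `P[Y₁ ≤ y | D = 0]` under Condition S₀). -/
theorem bounds_on_counterfactual_distribution_untreated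
    {Ω : Type*} [MeasurableSpace Ω] (μ : Measure Ω) [IsProbabilityMeasure μ]
    (L : ℕ) [NeZero L]
    (Y0 Y1 Y : Ω → ℝ) (D : Ω → ℕ) (Z : Ω → Fin L)
    (hmY0 : Measurable Y0) (hmY1 : Measurable Y1) (hmD : Measurable D) (hmZ : Measurable Z)
    (hD01 : ∀ ω, D ω = 0 ∨ D ω = 1)
    (hYobs : ∀ ω, Y ω = if D ω = 1 then Y1 ω else Y0 ω)
    (hZpos : ∀ ℓ : Fin L, 0 < pr μ {ω | Z ω = ℓ})
    (hposD0 : 0 < pr μ {ω | D ω = 0})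
    (hposD0Z : ∀ ℓ : Fin L, 0 < pr μ {ω | D ω = 0 ∧ Z ω = ℓ})
    (hindep0 : IndepFun Z Y0 μ) (hindep1 : IndepFun Z Y1 μ)
    (p : Fin L → ℝ) (hp : ∀ ℓ, p ℓ = cpr μ {ω | D ω = 1} {ω | Z ω = ℓ})
    (hp01 : ∀ ℓ, 0 < p ℓ ∧ p ℓ < 1)
    -- Condition S₀
    (condS0 : ∀ w wt : Fin L → ℝ, (∀ ℓ, 0 ≤ w ℓ) → (∀ ℓ, 0 ≤ wt ℓ) →
      (∑ ℓ, w ℓ) = 1 → (∑ ℓ, wt ℓ) = 1 →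
      (∀ y : ℝ, (∑ ℓ, w ℓ * cpr μ {ω | Y0 ω ≤ y} {ω | D ω = 0 ∧ Z ω = ℓ})
        ≤ ∑ ℓ, wt ℓ * cpr μ {ω | Y0 ω ≤ y} {ω | D ω = 0 ∧ Z ω = ℓ}) →
      (∀ y : ℝ, (∑ ℓ, w ℓ * cpr μ {ω | Y1 ω ≤ y} {ω | D ω = 0 ∧ Z ω = ℓ})
        ≤ ∑ ℓ, wt ℓ * cpr μ {ω | Y1 ω ≤ y} {ω | D ω = 0 ∧ Z ω = ℓ}))
    -- γ, γ̃ ∈ Γ₀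
    (γ γt : Fin L → ℝ)
    (hγ0 : (∑ ℓ, γ ℓ) = 0) (hγ1 : (∑ ℓ, γ ℓ * (1 - p ℓ)) = 1)
    (hγt0 : (∑ ℓ, γt ℓ) = 0) (hγt1 : (∑ ℓ, γt ℓ * (1 - p ℓ)) = 1)
    -- the rank conditions
    (hUB : ∀ y : ℝ, cpr μ {ω | Y ω ≤ y} {ω | D ω = 0}
      ≤ ∑ ℓ, γ ℓ * cpr μ {ω | Y ω ≤ y ∧ D ω = 0} {ω | Z ω = ℓ})
    (hLB : ∀ y : ℝ, (∑ ℓ, γt ℓ * cpr μ {ω | Y ω ≤ y ∧ D ω = 0} {ω | Z ω = ℓ})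
      ≤ cpr μ {ω | Y ω ≤ y} {ω | D ω = 0}) :
    ∀ y : ℝ,
      (-∑ ℓ, γt ℓ * cpr μ {ω | Y ω ≤ y ∧ D ω = 1} {ω | Z ω = ℓ})
          ≤ cpr μ {ω | Y1 ω ≤ y} {ω | D ω = 0} ∧
        cpr μ {ω | Y1 ω ≤ y} {ω | D ω = 0}
          ≤ -∑ ℓ, γ ℓ * cpr μ {ω | Y ω ≤ y ∧ D ω = 1} {ω | Z ω = ℓ} := by
  have hZms : ∀ ℓ : Fin L, MeasurableSet {ω | Z ω = ℓ} :=
    fun ℓ => hmZ (measurableSet_singleton ℓ)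
  have hD0ms : MeasurableSet {ω | D ω = 0} := hmD (measurableSet_singleton 0)
  have hD1ms : MeasurableSet {ω | D ω = 1} := hmD (measurableSet_singleton 1)
  have hY1ms : ∀ y : ℝ, MeasurableSet {ω | Y1 ω ≤ y} := fun y => hmY1 measurableSet_Iic
  have hY0ms : ∀ y : ℝ, MeasurableSet {ω | Y0 ω ≤ y} := fun y => hmY0 measurableSet_Iic
  have hsplitD : ∀ (A : Set Ω), MeasurableSet A →
      pr μ A = pr μ (A ∩ {ω | D ω = 0}) + pr μ (A ∩ {ω | D ω = 1}) := by
    intro A hA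
    have hu : A = (A ∩ {ω | D ω = 0}) ∪ (A ∩ {ω | D ω = 1}) := by
      ext ω
      rcases hD01 ω with h | h <;> simp [h]
    have hdisj : Disjoint (A ∩ {ω | D ω = 0}) (A ∩ {ω | D ω = 1}) := by
      rw [Set.disjoint_left]
      rintro ω ⟨-, h0⟩ ⟨-, h1⟩
      rw [Set.mem_setOf_eq] at h0 h1
      omega
    conv_lhs => rw [hu]
    exact pr_union_disj μ hdisj (hA.inter hD1ms)
  have hNne : ∀ ℓ, pr μ {ω | D ω = 0 ∧ Z ω = ℓ} ≠ 0 := fun ℓ => (hposD0Z ℓ).ne'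
  have hP0ne : pr μ {ω | D ω = 0} ≠ 0 := hposD0.ne'
  have hPzne : ∀ ℓ, pr μ {ω | Z ω = ℓ} ≠ 0 := fun ℓ => (hZpos ℓ).ne'
  have hq : ∀ ℓ, 1 - p ℓ = pr μ {ω | D ω = 0 ∧ Z ω = ℓ} / pr μ {ω | Z ω = ℓ} := by
    intro ℓ
    have hsplit := hsplitD {ω | Z ω = ℓ} (hZms ℓ)
    have h1 : ({ω | Z ω = ℓ} ∩ {ω | D ω = 0} : Set Ω) = {ω | D ω = 0 ∧ Z ω = ℓ} := by
      ext ω; simp only [Set.mem_inter_iff, Set.mem_setOf_eq]; tauto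
    have h2 : ({ω | Z ω = ℓ} ∩ {ω | D ω = 1} : Set Ω) = {ω | D ω = 1} ∩ {ω | Z ω = ℓ} :=
      Set.inter_comm _ _
    rw [h1, h2] at hsplit
    rw [hp ℓ, cpr, eq_div_iff (hPzne ℓ), sub_mul, one_mul, div_mul_cancel₀ _ (hPzne ℓ)]
    linarith [hsplit]
  have hind1 : ∀ (y : ℝ) (ℓ : Fin L), pr μ ({ω | Y1 ω ≤ y} ∩ {ω | Z ω = ℓ})
      = pr μ {ω | Z ω = ℓ} * pr μ {ω | Y1 ω ≤ y} := by
    intro y ℓ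
    have h := hindep1.measure_inter_preimage_eq_mul (s := {ℓ}) (t := Set.Iic y)
      (measurableSet_singleton ℓ) measurableSet_Iic
    unfold pr
    rw [Set.inter_comm]
    rw [show ({ω | Z ω = ℓ} : Set Ω) = Z ⁻¹' {ℓ} from rfl,
        show ({ω | Y1 ω ≤ y} : Set Ω) = Y1 ⁻¹' (Set.Iic y) from rfl, h, ENNReal.toReal_mul]
  have hS1 : ∀ (y : ℝ) (ℓ : Fin L), ({ω | Y ω ≤ y ∧ D ω = 0} ∩ {ω | Z ω = ℓ} : Set Ω)
      = {ω | Y0 ω ≤ y} ∩ {ω | D ω = 0 ∧ Z ω = ℓ} := by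
    intro y ℓ; ext ω
    rcases hD01 ω with h | h <;>
      simp [Set.mem_inter_iff, Set.mem_setOf_eq, hYobs ω, h, and_assoc]
  have hS2 : ∀ (y : ℝ) (ℓ : Fin L), ({ω | Y ω ≤ y ∧ D ω = 1} ∩ {ω | Z ω = ℓ} : Set Ω)
      = ({ω | Y1 ω ≤ y} ∩ {ω | Z ω = ℓ}) ∩ {ω | D ω = 1} := by
    intro y ℓ; ext ω
    rcases hD01 ω with h | h <;>
      simp [Set.mem_inter_iff, Set.mem_setOf_eq, hYobs ω, h, and_assoc] <;> tauto
  have hS3 : ∀ y : ℝ, ({ω | Y ω ≤ y} ∩ {ω | D ω = 0} : Set Ω)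
      = {ω | Y0 ω ≤ y} ∩ {ω | D ω = 0} := by
    intro y; ext ω
    rcases hD01 ω with h | h <;> simp [Set.mem_setOf_eq, hYobs ω, h]
  have hS4 : ∀ (y : ℝ) (ℓ : Fin L), (({ω | Y1 ω ≤ y} ∩ {ω | Z ω = ℓ}) ∩ {ω | D ω = 0} : Set Ω)
      = {ω | Y1 ω ≤ y} ∩ {ω | D ω = 0 ∧ Z ω = ℓ} := by
    intro y ℓ; ext ω
    simp only [Set.mem_inter_iff, Set.mem_setOf_eq]; tauto
  have hE3 : ∀ (y : ℝ) (ℓ : Fin L), cpr μ {ω | Y ω ≤ y ∧ D ω = 0} {ω | Z ω = ℓ}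
      = (1 - p ℓ) * cpr μ {ω | Y0 ω ≤ y} {ω | D ω = 0 ∧ Z ω = ℓ} := by
    intro y ℓ
    rw [cpr, cpr, hS1 y ℓ, hq ℓ, div_mul_div_comm,
      mul_comm (pr μ {ω | Z ω = ℓ}) (pr μ {ω | D ω = 0 ∧ Z ω = ℓ}),
      mul_div_mul_left _ _ (hNne ℓ)]
  have hE4 : ∀ (y : ℝ) (ℓ : Fin L), cpr μ {ω | Y ω ≤ y ∧ D ω = 1} {ω | Z ω = ℓ}
      = pr μ {ω | Y1 ω ≤ y} - (1 - p ℓ) * cpr μ {ω | Y1 ω ≤ y} {ω | D ω = 0 ∧ Z ω = ℓ} := by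
    intro y ℓ
    have hsplit := hsplitD ({ω | Y1 ω ≤ y} ∩ {ω | Z ω = ℓ}) ((hY1ms y).inter (hZms ℓ))
    rw [hind1 y ℓ, hS4 y ℓ] at hsplit
    rw [cpr, cpr, hS2 y ℓ, hq ℓ, div_mul_div_comm,
      mul_comm (pr μ {ω | Z ω = ℓ}) (pr μ {ω | D ω = 0 ∧ Z ω = ℓ}),
      mul_div_mul_left _ _ (hNne ℓ), eq_sub_iff_add_eq, ← add_div,
      div_eq_iff (hPzne ℓ)]
    linarith [hsplit]
  have hE1 : ∀ y : ℝ, cpr μ {ω | Y ω ≤ y} {ω | D ω = 0}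
      = ∑ ℓ, (pr μ {ω | D ω = 0 ∧ Z ω = ℓ} / pr μ {ω | D ω = 0})
          * cpr μ {ω | Y0 ω ≤ y} {ω | D ω = 0 ∧ Z ω = ℓ} := by
    intro y
    rw [cpr, hS3 y, pr_partition μ Z hmZ ((hY0ms y).inter hD0ms), Finset.sum_div]
    refine Finset.sum_congr rfl fun ℓ _ => ?_
    rw [Set.inter_assoc,
      show ({ω | D ω = 0} ∩ {ω | Z ω = ℓ} : Set Ω) = {ω | D ω = 0 ∧ Z ω = ℓ} from rfl, cpr,
      div_mul_div_comm,
      mul_comm (pr μ {ω | D ω = 0}) (pr μ {ω | D ω = 0 ∧ Z ω = ℓ}),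
      mul_div_mul_left _ _ (hNne ℓ)]
  have hE2 : ∀ y : ℝ, cpr μ {ω | Y1 ω ≤ y} {ω | D ω = 0}
      = ∑ ℓ, (pr μ {ω | D ω = 0 ∧ Z ω = ℓ} / pr μ {ω | D ω = 0})
          * cpr μ {ω | Y1 ω ≤ y} {ω | D ω = 0 ∧ Z ω = ℓ} := by
    intro y
    rw [cpr, pr_partition μ Z hmZ ((hY1ms y).inter hD0ms), Finset.sum_div]
    refine Finset.sum_congr rfl fun ℓ _ => ?_
    rw [Set.inter_assoc,
      show ({ω | D ω = 0} ∩ {ω | Z ω = ℓ} : Set Ω) = {ω | D ω = 0 ∧ Z ω = ℓ} from rfl, cpr,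
      div_mul_div_comm,
      mul_comm (pr μ {ω | D ω = 0}) (pr μ {ω | D ω = 0 ∧ Z ω = ℓ}),
      mul_div_mul_left _ _ (hNne ℓ)]
  have hwsum : (∑ ℓ, pr μ {ω | D ω = 0 ∧ Z ω = ℓ} / pr μ {ω | D ω = 0}) = 1 := by
    have hpart := pr_partition μ Z hmZ hD0ms
    rw [← Finset.sum_div, show (∑ ℓ, pr μ {ω | D ω = 0 ∧ Z ω = ℓ})
      = ∑ ℓ, pr μ ({ω | D ω = 0} ∩ {ω | Z ω = ℓ}) from rfl, ← hpart, div_self hP0ne]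
  have hw0 : ∀ ℓ, 0 ≤ pr μ {ω | D ω = 0 ∧ Z ω = ℓ} / pr μ {ω | D ω = 0} :=
    fun ℓ => div_nonneg (pr_nonneg μ _) (pr_nonneg μ _)
  have hUB' : ∀ y : ℝ,
      (∑ ℓ, (pr μ {ω | D ω = 0 ∧ Z ω = ℓ} / pr μ {ω | D ω = 0})
        * cpr μ {ω | Y0 ω ≤ y} {ω | D ω = 0 ∧ Z ω = ℓ})
      ≤ ∑ ℓ, (γ ℓ * (1 - p ℓ)) * cpr μ {ω | Y0 ω ≤ y} {ω | D ω = 0 ∧ Z ω = ℓ} := by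
    intro y
    have h := hUB y
    rw [hE1 y] at h
    refine le_of_le_of_eq h (Finset.sum_congr rfl fun ℓ _ => ?_)
    rw [hE3 y ℓ]; ring
  have hLB' : ∀ y : ℝ,
      (∑ ℓ, (γt ℓ * (1 - p ℓ)) * cpr μ {ω | Y0 ω ≤ y} {ω | D ω = 0 ∧ Z ω = ℓ})
      ≤ ∑ ℓ, (pr μ {ω | D ω = 0 ∧ Z ω = ℓ} / pr μ {ω | D ω = 0})
        * cpr μ {ω | Y0 ω ≤ y} {ω | D ω = 0 ∧ Z ω = ℓ} := by
    intro y
    have h := hLB y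
    rw [hE1 y] at h
    refine le_of_eq_of_le (Finset.sum_congr rfl fun ℓ _ => ?_) h
    rw [hE3 y ℓ]; ring
  have keyUB := transfer_ub
    (fun ℓ y => cpr μ {ω | Y0 ω ≤ y} {ω | D ω = 0 ∧ Z ω = ℓ})
    (fun ℓ y => cpr μ {ω | Y1 ω ≤ y} {ω | D ω = 0 ∧ Z ω = ℓ})
    condS0
    (fun ℓ => pr μ {ω | D ω = 0 ∧ Z ω = ℓ} / pr μ {ω | D ω = 0})
    (fun ℓ => γ ℓ * (1 - p ℓ))
    hw0 hwsum hγ1 hUB'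
  have keyLB := transfer_lb
    (fun ℓ y => cpr μ {ω | Y0 ω ≤ y} {ω | D ω = 0 ∧ Z ω = ℓ})
    (fun ℓ y => cpr μ {ω | Y1 ω ≤ y} {ω | D ω = 0 ∧ Z ω = ℓ})
    condS0
    (fun ℓ => pr μ {ω | D ω = 0 ∧ Z ω = ℓ} / pr μ {ω | D ω = 0})
    (fun ℓ => γt ℓ * (1 - p ℓ))
    hw0 hwsum hγt1 hLB'
  intro y
  have hfin : ∀ (g : Fin L → ℝ), (∑ ℓ, g ℓ) = 0 →
      (-∑ ℓ, g ℓ * cpr μ {ω | Y ω ≤ y ∧ D ω = 1} {ω | Z ω = ℓ})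
      = ∑ ℓ, (g ℓ * (1 - p ℓ)) * cpr μ {ω | Y1 ω ≤ y} {ω | D ω = 0 ∧ Z ω = ℓ} := by
    intro g hg
    have hsum : (∑ ℓ, g ℓ * cpr μ {ω | Y ω ≤ y ∧ D ω = 1} {ω | Z ω = ℓ})
        = (∑ ℓ, g ℓ) * pr μ {ω | Y1 ω ≤ y}
          - ∑ ℓ, (g ℓ * (1 - p ℓ)) * cpr μ {ω | Y1 ω ≤ y} {ω | D ω = 0 ∧ Z ω = ℓ} := by
      rw [Finset.sum_mul, ← Finset.sum_sub_distrib]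
      refine Finset.sum_congr rfl fun ℓ _ => ?_
      rw [hE4 y ℓ]; ring
    rw [hsum, hg]; ring
  constructor
  · rw [hfin γt hγt0, hE2 y]
    exact keyLB y
  · rw [hE2 y, hfin γ hγ0]
    exact keyUB y
end

section
/- Suppose Model 1 holds with ξ0 weakly more noisy than ξ1; that is: (i) D = h(Z, η) and Y = q(D, U_D), where q(d, ·) is continuous and strictly increasing and U_D = D·U1 + (1−D)·U0; (ii) conditional on (η, Z), U_d has the same distribution as U + ξ_d where ξ_d has a density and is independent of (η, U); (iii) conditional on Z, ξ0 has the same distribution as ξ1 + V for some random variable V with a density independent of ξ1. Then, together with independence of Z from (Y0, Y1), Condition S1* holds (and hence, under Assumption D, Condition S1 holds). -/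
open MeasureTheory ProbabilityTheory Filter Set

open scoped ENNReal

section AuxLemmas
variable {Ω : Type*} [MeasurableSpace Ω] {T : Type*} [MeasurableSpace T]

lemma aux_ae_nonneg {ν : Measure T} [IsFiniteMeasure ν] {f : T → ℝ} (hf : Measurable f)
    (h : ∀ s, MeasurableSet s → 0 ≤ ∫ t in s, f t ∂ν) : 0 ≤ᵐ[ν] f := by
  have key : ∀ n : ℕ, ν (f ⁻¹' (Icc (-(n + 1 : ℝ)) (-(1 / (n + 1))))) = 0 := by
    intro n
    set s := f ⁻¹' (Icc (-(n + 1 : ℝ)) (-(1 / (n + 1)))) with hsdef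
    have hsm : MeasurableSet s := hf measurableSet_Icc
    have hpos : (0:ℝ) < 1 / (n + 1) := by positivity
    have hint : IntegrableOn f s ν := by
      refine Integrable.mono' (integrable_const ((n : ℝ) + 1)) hf.aestronglyMeasurable ?_
      refine (ae_restrict_mem hsm).mono ?_
      intro t ht
      rw [Real.norm_eq_abs, abs_le]
      exact ⟨ht.1, by linarith [ht.2]⟩
    have hle : ∫ t in s, f t ∂ν ≤ ∫ t in s, (-(1 / (n + 1)) : ℝ) ∂ν := by
      refine setIntegral_mono_on hint (integrableOn_const (measure_ne_top ν s)) hsm ?_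
      exact fun t ht => ht.2
    rw [setIntegral_const, smul_eq_mul, measureReal_def] at hle
    have h0 := h s hsm
    have htr : (ν s).toReal = 0 := by nlinarith [ENNReal.toReal_nonneg (a := ν s)]
    exact (ENNReal.toReal_eq_zero_iff _).mp htr |>.resolve_right (measure_ne_top ν s)
  have hsub : {t | ¬ (0:ℝ) ≤ f t} ⊆ ⋃ n : ℕ, f ⁻¹' (Icc (-(n + 1 : ℝ)) (-(1 / (n + 1)))) := by
    intro t ht
    simp only [mem_setOf_eq, not_le] at ht
    obtain ⟨n1, hn1⟩ := exists_nat_one_div_lt (neg_pos.mpr ht)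
    obtain ⟨n2, hn2⟩ := exists_nat_ge (-(f t))
    refine mem_iUnion.mpr ⟨max n1 n2, ?_, ?_⟩
    · have : (n2 : ℝ) ≤ (max n1 n2 : ℕ) := by exact_mod_cast Nat.le_max_right n1 n2
      linarith
    · have h1 : (1:ℝ) / ((max n1 n2 : ℕ) + 1) ≤ 1 / (n1 + 1) := by
        apply one_div_le_one_div_of_le (by positivity)
        have : (n1 : ℝ) ≤ (max n1 n2 : ℕ) := by exact_mod_cast Nat.le_max_left n1 n2
        linarith
      linarith
  have : ν {t | ¬ (0:ℝ) ≤ f t} = 0 :=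
    measure_mono_null hsub (measure_iUnion_null key)
  exact ae_iff.mpr this

lemma aux_ae_le_one {ν : Measure T} [IsFiniteMeasure ν] {f : T → ℝ} (hf : Measurable f)
    (h : ∀ s, MeasurableSet s → ∫ t in s, f t ∂ν ≤ (ν s).toReal) : f ≤ᵐ[ν] 1 := by
  have key : ∀ n : ℕ, ν (f ⁻¹' (Icc (1 + 1 / (n + 1) : ℝ) (n + 1))) = 0 := by
    intro n
    set s := f ⁻¹' (Icc (1 + 1 / (n + 1) : ℝ) (n + 1)) with hsdef
    have hsm : MeasurableSet s := hf measurableSet_Icc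
    have hpos : (0:ℝ) < 1 / (n + 1) := by positivity
    have hint : IntegrableOn f s ν := by
      refine Integrable.mono' (integrable_const ((n : ℝ) + 1)) hf.aestronglyMeasurable ?_
      refine (ae_restrict_mem hsm).mono ?_
      intro t ht
      rw [Real.norm_eq_abs, abs_le]
      exact ⟨by linarith [ht.1], ht.2⟩
    have hge : ∫ t in s, (1 + 1 / (n + 1) : ℝ) ∂ν ≤ ∫ t in s, f t ∂ν := by
      refine setIntegral_mono_on (integrableOn_const (measure_ne_top ν s)) hint hsm ?_
      exact fun t ht => ht.1
    rw [setIntegral_const, smul_eq_mul, measureReal_def] at hge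
    have h0 := h s hsm
    have htr : (ν s).toReal = 0 := by nlinarith [ENNReal.toReal_nonneg (a := ν s)]
    exact (ENNReal.toReal_eq_zero_iff _).mp htr |>.resolve_right (measure_ne_top ν s)
  have hsub : {t | ¬ f t ≤ 1} ⊆ ⋃ n : ℕ, f ⁻¹' (Icc (1 + 1 / (n + 1) : ℝ) (n + 1)) := by
    intro t ht
    simp only [mem_setOf_eq, not_le] at ht
    obtain ⟨n1, hn1⟩ := exists_nat_one_div_lt (sub_pos.mpr ht)
    obtain ⟨n2, hn2⟩ := exists_nat_ge (f t)
    refine mem_iUnion.mpr ⟨max n1 n2, ?_, ?_⟩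
    · have h1 : (1:ℝ) / ((max n1 n2 : ℕ) + 1) ≤ 1 / (n1 + 1) := by
        apply one_div_le_one_div_of_le (by positivity)
        have : (n1 : ℝ) ≤ (max n1 n2 : ℕ) := by exact_mod_cast Nat.le_max_left n1 n2
        linarith
      linarith
    · have : (n2 : ℝ) ≤ (max n1 n2 : ℕ) := by exact_mod_cast Nat.le_max_right n1 n2
      linarith
  have : ν {t | ¬ f t ≤ (1 : T → ℝ) t} = 0 := by
    refine measure_mono_null ?_ (measure_iUnion_null key)
    exact hsub
  exact ae_iff.mpr this



/-- If the set-integrals of `f` against `ν` represent the finite measure `m ≤ ν`,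
then `ν.withDensity (ofReal ∘ f) = m`. -/
lemma aux_withDensity {ν m : Measure T} [IsFiniteMeasure ν] {f : T → ℝ} (hf : Measurable f)
    (h : ∀ s, MeasurableSet s → ∫ t in s, f t ∂ν = (m s).toReal)
    (hle : ∀ s, MeasurableSet s → m s ≤ ν s) :
    ν.withDensity (fun t => ENNReal.ofReal (f t)) = m := by
  have hmt : ∀ s, m s ≠ ⊤ := fun s => by
    by_cases hs : MeasurableSet s
    · exact ((hle s hs).trans_lt (measure_lt_top ν s)).ne
    · exact ((measure_mono (subset_univ s)).trans_lt
        ((hle univ MeasurableSet.univ).trans_lt (measure_lt_top ν univ))).ne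
  have h0 : 0 ≤ᵐ[ν] f := aux_ae_nonneg hf (fun s hs => (h s hs) ▸ ENNReal.toReal_nonneg)
  have h1 : f ≤ᵐ[ν] 1 := aux_ae_le_one hf (fun s hs => (h s hs) ▸
    ENNReal.toReal_mono (measure_ne_top ν s) (hle s hs))
  have hint : Integrable f ν := by
    refine Integrable.mono' (integrable_const (1:ℝ)) hf.aestronglyMeasurable ?_
    filter_upwards [h0, h1] with t ht0 ht1
    simp only [Pi.zero_apply] at ht0
    simp only [Pi.one_apply] at ht1
    rw [Real.norm_eq_abs, abs_le]
    exact ⟨by linarith, ht1⟩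
  refine Measure.ext fun s hs => ?_
  rw [withDensity_apply _ hs]
  have := ofReal_integral_eq_lintegral_ofReal (hint.restrict (s := s)) (ae_restrict_of_ae h0)
  rw [← this, h s hs, ENNReal.ofReal_toReal (hmt s)]


/-- Set-lintegral of a composed weight equals lintegral against the pushforward of the
restricted measure. -/
lemma aux_setLintegral_comp (μ : Measure Ω) {η : Ω → T} (hmη : Measurable η)
    {g : T → ℝ≥0∞} (hg : Measurable g) (A : Set Ω) :
    ∫⁻ ω in A, g (η ω) ∂μ = ∫⁻ t, g t ∂((μ.restrict A).map η) :=
  (lintegral_map hg hmη).symm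

lemma aux_map_restrict_eq (μ : Measure Ω) {η : Ω → T} (hmη : Measurable η)
    {A B : Set Ω}
    (h : ∀ s, MeasurableSet s → μ (A ∩ η ⁻¹' s) = μ (B ∩ η ⁻¹' s)) :
    (μ.restrict A).map η = (μ.restrict B).map η := by
  refine Measure.ext fun s hs => ?_
  rw [Measure.map_apply hmη hs, Measure.map_apply hmη hs,
    Measure.restrict_apply (hmη hs), Measure.restrict_apply (hmη hs),
    inter_comm (η ⁻¹' s) A, inter_comm (η ⁻¹' s) B]
  exact h s hs

/-- The key bridge: the weighted integral of the conditional CDF equals the set-lintegral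
of the weight over the event. -/
lemma aux_bridge (μ : Measure Ω) [IsProbabilityMeasure μ] {η : Ω → T} (hmη : Measurable η)
    {A : Set Ω} (hA : MeasurableSet A) {f : T → ℝ} (hf : Measurable f)
    (hrep : ∀ s, MeasurableSet s → ∫ t in s, f t ∂(μ.map η) = (μ (A ∩ η ⁻¹' s)).toReal)
    {g : T → ℝ} (hg : Measurable g) (hg0 : ∀ t, 0 ≤ g t) :
    ∫ t, g t * f t ∂(μ.map η) = (∫⁻ ω in A, ENNReal.ofReal (g (η ω)) ∂μ).toReal := by
  set ν := μ.map η with hν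
  haveI : IsProbabilityMeasure ν := Measure.isProbabilityMeasure_map hmη.aemeasurable
  set m := (μ.restrict A).map η with hm
  have hmapp : ∀ s, MeasurableSet s → m s = μ (A ∩ η ⁻¹' s) := fun s hs => by
    rw [hm, Measure.map_apply hmη hs, Measure.restrict_apply (hmη hs), inter_comm]
  have hle : ∀ s, MeasurableSet s → m s ≤ ν s := fun s hs => by
    rw [hmapp s hs, hν, Measure.map_apply hmη hs]
    exact measure_mono inter_subset_right
  have hwd : ν.withDensity (fun t => ENNReal.ofReal (f t)) = m :=
    aux_withDensity hf
      (fun s hs => (hrep s hs).trans (congrArg ENNReal.toReal (hmapp s hs)).symm) hle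
  have h0 : 0 ≤ᵐ[ν] f := aux_ae_nonneg hf fun s hs => (hrep s hs) ▸ ENNReal.toReal_nonneg
  calc ∫ t, g t * f t ∂ν
      = (∫⁻ t, ENNReal.ofReal (g t * f t) ∂ν).toReal := by
        refine integral_eq_lintegral_of_nonneg_ae ?_ (hg.mul hf).aestronglyMeasurable
        filter_upwards [h0] with t ht
        simp only [Pi.zero_apply] at ht ⊢
        exact mul_nonneg (hg0 t) ht
    _ = (∫⁻ t, ((fun t => ENNReal.ofReal (f t)) * fun t => ENNReal.ofReal (g t)) t ∂ν).toReal := by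
        congr 1
        refine lintegral_congr fun t => ?_
        simp only [Pi.mul_apply]
        rw [ENNReal.ofReal_mul (hg0 t), mul_comm]
    _ = (∫⁻ t, ENNReal.ofReal (g t) ∂(ν.withDensity fun t => ENNReal.ofReal (f t))).toReal := by
        rw [lintegral_withDensity_eq_lintegral_mul ν hf.ennreal_ofReal hg.ennreal_ofReal]
    _ = (∫⁻ t, ENNReal.ofReal (g t) ∂m).toReal := by rw [hwd]
    _ = (∫⁻ ω in A, ENNReal.ofReal (g (η ω)) ∂μ).toReal := by
        rw [hm, ← aux_setLintegral_comp μ hmη hg.ennreal_ofReal]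


lemma aux_partition {L : ℕ} (μ : Measure Ω) {Z : Ω → Fin L} (hmZ : Measurable Z)
    {A : Set Ω} (hA : MeasurableSet A) :
    μ A = ∑ ℓ : Fin L, μ (A ∩ {ω | Z ω = ℓ}) := by
  have hcover : A = ⋃ ℓ : Fin L, A ∩ {ω | Z ω = ℓ} := by
    ext ω; simp [mem_iUnion]
  have hdisj : Pairwise (Function.onFun Disjoint fun ℓ : Fin L => A ∩ {ω | Z ω = ℓ}) := by
    intro i j hij
    refine Set.disjoint_left.mpr fun ω hi hj => hij ?_
    rw [← hi.2, ← hj.2]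
  have hmeas : ∀ ℓ : Fin L, MeasurableSet (A ∩ {ω | Z ω = ℓ}) := fun ℓ =>
    hA.inter (hmZ (measurableSet_singleton ℓ))
  conv_lhs => rw [hcover]
  rw [measure_iUnion hdisj hmeas, tsum_fintype]

lemma aux_cdf_map_eq (μ : Measure Ω) [IsProbabilityMeasure μ] {X Y' : Ω → ℝ}
    (hmX : Measurable X) (hmY : Measurable Y')
    (h : ∀ s : ℝ, μ {ω | X ω ≤ s} = μ {ω | Y' ω ≤ s}) : μ.map X = μ.map Y' := by
  haveI : IsProbabilityMeasure (μ.map X) := Measure.isProbabilityMeasure_map hmX.aemeasurable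
  refine Measure.ext_of_Iic (μ.map X) (μ.map Y') fun a => ?_
  rw [Measure.map_apply hmX measurableSet_Iic, Measure.map_apply hmY measurableSet_Iic]
  exact h a

/-- Fubini/independence step: slice the event `{U + X ≤ u}` by the value of `X`. -/
lemma aux_indep_slice (μ : Measure Ω) [IsProbabilityMeasure μ]
    {X U : Ω → ℝ} {η : Ω → T} (hmX : Measurable X) (hmU : Measurable U) (hmη : Measurable η)
    {g : T → ℝ≥0∞} (hg : Measurable g)
    (hind : IndepFun X (fun ω => (η ω, U ω)) μ) (u : ℝ) :
    ∫⁻ ω in {ω | U ω + X ω ≤ u}, g (η ω) ∂μ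
      = ∫⁻ e, (∫⁻ ω in {ω | U ω ≤ u - e}, g (η ω) ∂μ) ∂(μ.map X) := by
  set F : ℝ × (T × ℝ) → ℝ≥0∞ := fun p => if p.2.2 + p.1 ≤ u then g p.2.1 else 0 with hF
  have hFmeas : Measurable F := by
    refine Measurable.ite ?_ (hg.comp (measurable_snd.fst)) measurable_const
    exact measurableSet_le (measurable_snd.snd.add measurable_fst) measurable_const
  have hpair : Measurable (fun ω => (X ω, (η ω, U ω))) := hmX.prodMk (hmη.prodMk hmU)
  have hprod : μ.map (fun ω => (X ω, (η ω, U ω)))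
      = (μ.map X).prod (μ.map (fun ω => (η ω, U ω))) :=
    (indepFun_iff_map_prod_eq_prod_map_map hmX.aemeasurable
      (hmη.prodMk hmU).aemeasurable).mp hind
  have hLHS : ∫⁻ ω in {ω | U ω + X ω ≤ u}, g (η ω) ∂μ
      = ∫⁻ ω, F (X ω, (η ω, U ω)) ∂μ := by
    rw [← lintegral_indicator (by exact measurableSet_le (hmU.add hmX) measurable_const)]
    refine lintegral_congr fun ω => ?_
    simp only [hF, Set.indicator_apply, mem_setOf_eq]
  rw [hLHS, ← lintegral_map hFmeas hpair, hprod, lintegral_prod _ hFmeas.aemeasurable]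
  refine lintegral_congr fun e => ?_
  have : ∀ᵉ (q : T × ℝ), F (e, q) = (fun q : T × ℝ => if q.2 ≤ u - e then g q.1 else 0) q := by
    intro q
    simp only [hF]
    exact if_congr (by rw [le_sub_iff_add_le]) rfl rfl
  rw [lintegral_congr this, lintegral_map (by
      refine Measurable.ite ?_ (hg.comp measurable_fst) measurable_const
      exact measurableSet_le measurable_snd measurable_const) (hmη.prodMk hmU)]
  rw [← lintegral_indicator (by exact measurableSet_le hmU measurable_const)]
  refine lintegral_congr fun ω => ?_
  simp only [Set.indicator_apply, mem_setOf_eq]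

/-- Convolution step. -/
lemma aux_conv (μ : Measure Ω) [IsProbabilityMeasure μ]
    {ξ1 V : Ω → ℝ} (hmξ1 : Measurable ξ1) (hmV : Measurable V)
    (hind : IndepFun V ξ1 μ) {Ψ : ℝ → ℝ≥0∞} (hΨ : Measurable Ψ) (u : ℝ) :
    ∫⁻ e, Ψ (u - e) ∂(μ.map (fun ω => ξ1 ω + V ω))
      = ∫⁻ v, (∫⁻ e, Ψ ((u - v) - e) ∂(μ.map ξ1)) ∂(μ.map V) := by
  have h1 : Measurable fun e : ℝ => Ψ (u - e) := hΨ.comp (measurable_const.sub measurable_id)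
  rw [lintegral_map h1 (by exact hmξ1.add hmV : Measurable fun ω => ξ1 ω + V ω)]
  have hpair : Measurable fun ω => (V ω, ξ1 ω) := hmV.prodMk hmξ1
  have hG : Measurable fun p : ℝ × ℝ => Ψ (u - (p.2 + p.1)) :=
    hΨ.comp (measurable_const.sub (measurable_snd.add measurable_fst))
  have : ∫⁻ ω, Ψ (u - (ξ1 ω + V ω)) ∂μ
      = ∫⁻ p : ℝ × ℝ, Ψ (u - (p.2 + p.1)) ∂(μ.map fun ω => (V ω, ξ1 ω)) :=
    (lintegral_map hG hpair).symm
  rw [this, (indepFun_iff_map_prod_eq_prod_map_map hmV.aemeasurable hmξ1.aemeasurable).mp hind,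
    lintegral_prod _ hG.aemeasurable]
  refine lintegral_congr fun v => ?_
  refine lintegral_congr fun e => ?_
  congr 1
  ring


/-- The heart of Theorem 3: Condition S₁*. -/
lemma core_S1star (μ : Measure Ω) [IsProbabilityMeasure μ] (L : ℕ)
    (U U0 U1 ξ0 ξ1 V : Ω → ℝ) (η : Ω → T) (Z : Ω → Fin L)
    (q : ℕ → ℝ → ℝ) (Y0 Y1 : Ω → ℝ)
    (hmU : Measurable U) (hmU0 : Measurable U0) (hmU1 : Measurable U1)
    (hmξ0 : Measurable ξ0) (hmξ1 : Measurable ξ1) (hmV : Measurable V)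
    (hmη : Measurable η) (hmZ : Measurable Z)
    (hq : ∀ d, Continuous (q d) ∧ StrictMono (q d))
    (hY0 : ∀ ω, Y0 ω = q 0 (U0 ω)) (hY1 : ∀ ω, Y1 ω = q 1 (U1 ω))
    (hξ0indep : IndepFun ξ0 (fun ω => (η ω, U ω)) μ)
    (hξ1indep : IndepFun ξ1 (fun ω => (η ω, U ω)) μ)
    (hdist0 : ∀ (u : ℝ) (s : Set T), MeasurableSet s → ∀ ℓ : Fin L,
      (μ {ω | U0 ω ≤ u ∧ η ω ∈ s ∧ Z ω = ℓ}).toReal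
        = (μ {ω | U ω + ξ0 ω ≤ u ∧ η ω ∈ s ∧ Z ω = ℓ}).toReal)
    (hdist1 : ∀ (u : ℝ) (s : Set T), MeasurableSet s → ∀ ℓ : Fin L,
      (μ {ω | U1 ω ≤ u ∧ η ω ∈ s ∧ Z ω = ℓ}).toReal
        = (μ {ω | U ω + ξ1 ω ≤ u ∧ η ω ∈ s ∧ Z ω = ℓ}).toReal)
    (hVindep : IndepFun V ξ1 μ)
    (hnoise : ∀ (s : ℝ) (ℓ : Fin L),
      (μ {ω | ξ0 ω ≤ s ∧ Z ω = ℓ}).toReal = (μ {ω | ξ1 ω + V ω ≤ s ∧ Z ω = ℓ}).toReal)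
    (F0 F1 : ℝ → T → ℝ)
    (hF0meas : ∀ y, Measurable (F0 y)) (hF1meas : ∀ y, Measurable (F1 y))
    (hF0 : ∀ (y : ℝ) (s : Set T), MeasurableSet s →
      (μ {ω | Y0 ω ≤ y ∧ η ω ∈ s}).toReal = ∫ t in s, F0 y t ∂(μ.map η))
    (hF1 : ∀ (y : ℝ) (s : Set T), MeasurableSet s →
      (μ {ω | Y1 ω ≤ y ∧ η ω ∈ s}).toReal = ∫ t in s, F1 y t ∂(μ.map η))
    (w wt : T → ℝ) (hwm : Measurable w) (hwtm : Measurable wt)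
    (hw0 : ∀ t, 0 ≤ w t) (hwt0 : ∀ t, 0 ≤ wt t)
    (hwint : (∫ t, w t ∂(μ.map η)) = 1) (hwtint : (∫ t, wt t ∂(μ.map η)) = 1)
    (hyp : ∀ y : ℝ, (∫ t, w t * F1 y t ∂(μ.map η)) ≤ ∫ t, wt t * F1 y t ∂(μ.map η)) :
    ∀ y : ℝ, (∫ t, w t * F0 y t ∂(μ.map η)) ≤ ∫ t, wt t * F0 y t ∂(μ.map η) := by
  have hmY0 : Measurable Y0 := by
    have : Y0 = fun ω => q 0 (U0 ω) := funext hY0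
    rw [this]; exact (hq 0).1.measurable.comp hmU0
  have hmY1 : Measurable Y1 := by
    have : Y1 = fun ω => q 1 (U1 ω) := funext hY1
    rw [this]; exact (hq 1).1.measurable.comp hmU1
  set ν := μ.map η with hν
  haveI : IsProbabilityMeasure ν := Measure.isProbabilityMeasure_map hmη.aemeasurable
  set W : Ω → ℝ≥0∞ := fun ω => ENNReal.ofReal (w (η ω)) with hW
  set Wt : Ω → ℝ≥0∞ := fun ω => ENNReal.ofReal (wt (η ω)) with hWt
  have hWm : Measurable W := (hwm.comp hmη).ennreal_ofReal
  have hWtm : Measurable Wt := (hwtm.comp hmη).ennreal_ofReal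
  -- total masses
  have hwInt : Integrable w ν := by
    by_contra hni; rw [integral_undef hni] at hwint; exact one_ne_zero hwint.symm
  have hwtInt : Integrable wt ν := by
    by_contra hni; rw [integral_undef hni] at hwtint; exact one_ne_zero hwtint.symm
  have htotW : ∫⁻ ω, W ω ∂μ = 1 := by
    have e1 : ∫⁻ ω, W ω ∂μ = ∫⁻ t, ENNReal.ofReal (w t) ∂ν :=
      (lintegral_map hwm.ennreal_ofReal hmη).symm
    rw [e1, ← ofReal_integral_eq_lintegral_ofReal hwInt (ae_of_all _ hw0), hwint,
      ENNReal.ofReal_one]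
  have htotWt : ∫⁻ ω, Wt ω ∂μ = 1 := by
    have e1 : ∫⁻ ω, Wt ω ∂μ = ∫⁻ t, ENNReal.ofReal (wt t) ∂ν :=
      (lintegral_map hwtm.ennreal_ofReal hmη).symm
    rw [e1, ← ofReal_integral_eq_lintegral_ofReal hwtInt (ae_of_all _ hwt0), hwtint,
      ENNReal.ofReal_one]
  have hWfin : ∀ A : Set Ω, ∫⁻ ω in A, W ω ∂μ ≠ ⊤ := fun A =>
    (lt_of_le_of_lt (le_trans (setLIntegral_le_lintegral A W) htotW.le) ENNReal.one_lt_top).ne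
  have hWtfin : ∀ A : Set Ω, ∫⁻ ω in A, Wt ω ∂μ ≠ ⊤ := fun A =>
    (lt_of_le_of_lt (le_trans (setLIntegral_le_lintegral A Wt) htotWt.le) ENNReal.one_lt_top).ne
  -- bridging for F1 and F0
  have hrep1 : ∀ y : ℝ, ∀ s, MeasurableSet s →
      ∫ t in s, F1 y t ∂ν = (μ ({ω | Y1 ω ≤ y} ∩ η ⁻¹' s)).toReal := by
    intro y s hs
    rw [← hF1 y s hs]
    congr 1
  have hrep0 : ∀ y : ℝ, ∀ s, MeasurableSet s →
      ∫ t in s, F0 y t ∂ν = (μ ({ω | Y0 ω ≤ y} ∩ η ⁻¹' s)).toReal := by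
    intro y s hs
    rw [← hF0 y s hs]
    congr 1
  have hbridge1w : ∀ y : ℝ, ∫ t, w t * F1 y t ∂ν
      = (∫⁻ ω in {ω | Y1 ω ≤ y}, W ω ∂μ).toReal := fun y =>
    aux_bridge μ hmη (measurableSet_le hmY1 measurable_const) (hF1meas y)
      (fun s hs => (hrep1 y s hs).symm ▸ hrep1 y s hs) hwm hw0
  have hbridge1wt : ∀ y : ℝ, ∫ t, wt t * F1 y t ∂ν
      = (∫⁻ ω in {ω | Y1 ω ≤ y}, Wt ω ∂μ).toReal := fun y =>
    aux_bridge μ hmη (measurableSet_le hmY1 measurable_const) (hF1meas y)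
      (hrep1 y) hwtm hwt0
  have hbridge0w : ∀ y : ℝ, ∫ t, w t * F0 y t ∂ν
      = (∫⁻ ω in {ω | Y0 ω ≤ y}, W ω ∂μ).toReal := fun y =>
    aux_bridge μ hmη (measurableSet_le hmY0 measurable_const) (hF0meas y)
      (hrep0 y) hwm hw0
  have hbridge0wt : ∀ y : ℝ, ∫ t, wt t * F0 y t ∂ν
      = (∫⁻ ω in {ω | Y0 ω ≤ y}, Wt ω ∂μ).toReal := fun y =>
    aux_bridge μ hmη (measurableSet_le hmY0 measurable_const) (hF0meas y)
      (hrep0 y) hwtm hwt0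
  -- Step 1: ENNReal inequality at the level of Y1, hence U1
  have hY1ineq : ∀ y : ℝ, ∫⁻ ω in {ω | Y1 ω ≤ y}, W ω ∂μ ≤ ∫⁻ ω in {ω | Y1 ω ≤ y}, Wt ω ∂μ := by
    intro y
    have := hyp y
    rw [hbridge1w y, hbridge1wt y] at this
    exact (ENNReal.toReal_le_toReal (hWfin _) (hWtfin _)).mp this
  have hU1ineq : ∀ u : ℝ, ∫⁻ ω in {ω | U1 ω ≤ u}, W ω ∂μ
      ≤ ∫⁻ ω in {ω | U1 ω ≤ u}, Wt ω ∂μ := by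
    intro u
    have hset : {ω | Y1 ω ≤ q 1 u} = {ω | U1 ω ≤ u} := by
      ext ω; simp only [mem_setOf_eq, hY1 ω]
      exact (hq 1).2.le_iff_le
    have := hY1ineq (q 1 u)
    rwa [hset] at this
  -- Step 2: transfer from U1 to U + ξ1
  have htrans1 : ∀ u : ℝ,
      (μ.restrict {ω | U1 ω ≤ u}).map η = (μ.restrict {ω | U ω + ξ1 ω ≤ u}).map η := by
    intro u
    refine aux_map_restrict_eq μ hmη fun s hs => ?_
    have e1 : ∀ ℓ : Fin L, ({ω | U1 ω ≤ u} ∩ η ⁻¹' s) ∩ {ω | Z ω = ℓ}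
        = {ω | U1 ω ≤ u ∧ η ω ∈ s ∧ Z ω = ℓ} := by
      intro ℓ; ext ω; simp [mem_setOf_eq, and_assoc]
    have e2 : ∀ ℓ : Fin L, ({ω | U ω + ξ1 ω ≤ u} ∩ η ⁻¹' s) ∩ {ω | Z ω = ℓ}
        = {ω | U ω + ξ1 ω ≤ u ∧ η ω ∈ s ∧ Z ω = ℓ} := by
      intro ℓ; ext ω; simp [mem_setOf_eq, and_assoc]
    rw [aux_partition μ hmZ ((measurableSet_le hmU1 measurable_const).inter (hmη hs)),
      aux_partition μ hmZ ((measurableSet_le (by exact hmU.add hmξ1 : Measurable fun ω => U ω + ξ1 ω) measurable_const).inter (hmη hs))]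
    refine Finset.sum_congr rfl fun ℓ _ => ?_
    rw [e1 ℓ, e2 ℓ]
    exact (ENNReal.toReal_eq_toReal_iff' (measure_ne_top μ _) (measure_ne_top μ _)).mp
      (hdist1 u s hs ℓ)
  have hUξ1ineq : ∀ u : ℝ, ∫⁻ ω in {ω | U ω + ξ1 ω ≤ u}, W ω ∂μ
      ≤ ∫⁻ ω in {ω | U ω + ξ1 ω ≤ u}, Wt ω ∂μ := by
    intro u
    have ew : ∫⁻ ω in {ω | U ω + ξ1 ω ≤ u}, W ω ∂μ = ∫⁻ ω in {ω | U1 ω ≤ u}, W ω ∂μ := by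
      rw [hW, aux_setLintegral_comp μ hmη hwm.ennreal_ofReal,
        aux_setLintegral_comp μ hmη hwm.ennreal_ofReal, htrans1 u]
    have ewt : ∫⁻ ω in {ω | U ω + ξ1 ω ≤ u}, Wt ω ∂μ
        = ∫⁻ ω in {ω | U1 ω ≤ u}, Wt ω ∂μ := by
      rw [hWt, aux_setLintegral_comp μ hmη hwtm.ennreal_ofReal,
        aux_setLintegral_comp μ hmη hwtm.ennreal_ofReal, htrans1 u]
    rw [ew, ewt]; exact hU1ineq u
  -- Step 3: slice and convolve
  have hslice1w : ∀ u : ℝ, ∫⁻ ω in {ω | U ω + ξ1 ω ≤ u}, W ω ∂μ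
      = ∫⁻ e, (∫⁻ ω in {ω | U ω ≤ u - e}, W ω ∂μ) ∂(μ.map ξ1) :=
    aux_indep_slice μ hmξ1 hmU hmη hwm.ennreal_ofReal hξ1indep
  have hslice1wt : ∀ u : ℝ, ∫⁻ ω in {ω | U ω + ξ1 ω ≤ u}, Wt ω ∂μ
      = ∫⁻ e, (∫⁻ ω in {ω | U ω ≤ u - e}, Wt ω ∂μ) ∂(μ.map ξ1) :=
    aux_indep_slice μ hmξ1 hmU hmη hwtm.ennreal_ofReal hξ1indep
  have hslice0w : ∀ u : ℝ, ∫⁻ ω in {ω | U ω + ξ0 ω ≤ u}, W ω ∂μ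
      = ∫⁻ e, (∫⁻ ω in {ω | U ω ≤ u - e}, W ω ∂μ) ∂(μ.map ξ0) :=
    aux_indep_slice μ hmξ0 hmU hmη hwm.ennreal_ofReal hξ0indep
  have hslice0wt : ∀ u : ℝ, ∫⁻ ω in {ω | U ω + ξ0 ω ≤ u}, Wt ω ∂μ
      = ∫⁻ e, (∫⁻ ω in {ω | U ω ≤ u - e}, Wt ω ∂μ) ∂(μ.map ξ0) :=
    aux_indep_slice μ hmξ0 hmU hmη hwtm.ennreal_ofReal hξ0indep
  -- CDF equality of ξ0 and ξ1 + V
  have hmap0 : μ.map ξ0 = μ.map (fun ω => ξ1 ω + V ω) := by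
    refine aux_cdf_map_eq μ hmξ0 (hmξ1.add hmV) fun s => ?_
    have e1 : ∀ ℓ : Fin L, {ω | ξ0 ω ≤ s} ∩ {ω | Z ω = ℓ} = {ω | ξ0 ω ≤ s ∧ Z ω = ℓ} := by
      intro ℓ; ext ω; simp [mem_setOf_eq]
    have e2 : ∀ ℓ : Fin L, {ω | ξ1 ω + V ω ≤ s} ∩ {ω | Z ω = ℓ}
        = {ω | ξ1 ω + V ω ≤ s ∧ Z ω = ℓ} := by
      intro ℓ; ext ω; simp [mem_setOf_eq]
    rw [aux_partition μ hmZ (measurableSet_le hmξ0 measurable_const),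
      aux_partition μ hmZ (measurableSet_le (by exact hmξ1.add hmV : Measurable fun ω => ξ1 ω + V ω) measurable_const)]
    refine Finset.sum_congr rfl fun ℓ _ => ?_
    rw [e1 ℓ, e2 ℓ]
    exact (ENNReal.toReal_eq_toReal_iff' (measure_ne_top μ _) (measure_ne_top μ _)).mp (hnoise s ℓ)
  -- Ψ functions
  set Ψw : ℝ → ℝ≥0∞ := fun x => ∫⁻ ω in {ω | U ω ≤ x}, W ω ∂μ with hΨw
  set Ψwt : ℝ → ℝ≥0∞ := fun x => ∫⁻ ω in {ω | U ω ≤ x}, Wt ω ∂μ with hΨwt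
  have hΨwmono : Monotone Ψw := fun a b hab =>
    lintegral_mono_set (fun ω hω => le_trans hω hab)
  have hΨwtmono : Monotone Ψwt := fun a b hab =>
    lintegral_mono_set (fun ω hω => le_trans hω hab)
  have hΨwmeas : Measurable Ψw := hΨwmono.measurable
  have hΨwtmeas : Measurable Ψwt := hΨwtmono.measurable
  -- Step 4: inequality for U + ξ0
  have hUξ0ineq : ∀ u : ℝ, ∫⁻ ω in {ω | U ω + ξ0 ω ≤ u}, W ω ∂μ
      ≤ ∫⁻ ω in {ω | U ω + ξ0 ω ≤ u}, Wt ω ∂μ := by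
    intro u
    rw [hslice0w u, hslice0wt u, hmap0,
      aux_conv μ hmξ1 hmV hVindep hΨwmeas u, aux_conv μ hmξ1 hmV hVindep hΨwtmeas u]
    refine lintegral_mono fun v => ?_
    rw [← hslice1w (u - v), ← hslice1wt (u - v)]
    exact hUξ1ineq (u - v)
  -- Step 5: back to U0
  have htrans0 : ∀ u : ℝ,
      (μ.restrict {ω | U0 ω ≤ u}).map η = (μ.restrict {ω | U ω + ξ0 ω ≤ u}).map η := by
    intro u
    refine aux_map_restrict_eq μ hmη fun s hs => ?_
    have e1 : ∀ ℓ : Fin L, ({ω | U0 ω ≤ u} ∩ η ⁻¹' s) ∩ {ω | Z ω = ℓ}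
        = {ω | U0 ω ≤ u ∧ η ω ∈ s ∧ Z ω = ℓ} := by
      intro ℓ; ext ω; simp [mem_setOf_eq, and_assoc]
    have e2 : ∀ ℓ : Fin L, ({ω | U ω + ξ0 ω ≤ u} ∩ η ⁻¹' s) ∩ {ω | Z ω = ℓ}
        = {ω | U ω + ξ0 ω ≤ u ∧ η ω ∈ s ∧ Z ω = ℓ} := by
      intro ℓ; ext ω; simp [mem_setOf_eq, and_assoc]
    rw [aux_partition μ hmZ ((measurableSet_le hmU0 measurable_const).inter (hmη hs)),
      aux_partition μ hmZ ((measurableSet_le (by exact hmU.add hmξ0 : Measurable fun ω => U ω + ξ0 ω) measurable_const).inter (hmη hs))]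
    refine Finset.sum_congr rfl fun ℓ _ => ?_
    rw [e1 ℓ, e2 ℓ]
    exact (ENNReal.toReal_eq_toReal_iff' (measure_ne_top μ _) (measure_ne_top μ _)).mp
      (hdist0 u s hs ℓ)
  have hU0ineq : ∀ u : ℝ, ∫⁻ ω in {ω | U0 ω ≤ u}, W ω ∂μ
      ≤ ∫⁻ ω in {ω | U0 ω ≤ u}, Wt ω ∂μ := by
    intro u
    have ew : ∫⁻ ω in {ω | U0 ω ≤ u}, W ω ∂μ = ∫⁻ ω in {ω | U ω + ξ0 ω ≤ u}, W ω ∂μ := by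
      rw [hW, aux_setLintegral_comp μ hmη hwm.ennreal_ofReal,
        aux_setLintegral_comp μ hmη hwm.ennreal_ofReal, htrans0 u]
    have ewt : ∫⁻ ω in {ω | U0 ω ≤ u}, Wt ω ∂μ
        = ∫⁻ ω in {ω | U ω + ξ0 ω ≤ u}, Wt ω ∂μ := by
      rw [hWt, aux_setLintegral_comp μ hmη hwtm.ennreal_ofReal,
        aux_setLintegral_comp μ hmη hwtm.ennreal_ofReal, htrans0 u]
    rw [ew, ewt]; exact hUξ0ineq u
  -- Step 6: to the level of Y0 (lower-set analysis)
  have hY0ineq : ∀ y : ℝ, ∫⁻ ω in {ω | Y0 ω ≤ y}, W ω ∂μ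
      ≤ ∫⁻ ω in {ω | Y0 ω ≤ y}, Wt ω ∂μ := by
    intro y
    set A : Set ℝ := {x | q 0 x ≤ y} with hA
    have hpre : {ω | Y0 ω ≤ y} = U0 ⁻¹' A := by
      ext ω; simp only [mem_setOf_eq, mem_preimage, hA, hY0 ω]
    have hlow : ∀ x x' : ℝ, x ≤ x' → x' ∈ A → x ∈ A := fun x x' hxx' hx' =>
      le_trans ((hq 0).2.monotone hxx') hx'
    by_cases hne : A = ∅
    · rw [hpre, hne]
      simp
    by_cases huniv : A = univ
    · rw [hpre, huniv]
      simp only [preimage_univ, Measure.restrict_univ]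
      rw [htotW, htotWt]
    -- A is a proper nonempty lower set
    obtain ⟨b, hb⟩ : ∃ b, b ∉ A := by
      by_contra hc; push_neg at hc; exact huniv (eq_univ_of_forall hc)
    have hAne : A.Nonempty := nonempty_iff_ne_empty.mpr hne
    have hbdd : BddAbove A := ⟨b, fun a ha => by
      by_contra hab; push_neg at hab
      exact hb (hlow b a hab.le ha)⟩
    set c := sSup A with hc
    have hIio : Iio c ⊆ A := fun x hx => by
      obtain ⟨a, ha, hxa⟩ := exists_lt_of_lt_csSup hAne hx
      exact hlow x a hxa.le ha
    by_cases hcA : c ∈ A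
    · have hAeq : A = Iic c := by
        ext x
        exact ⟨fun hx => le_csSup hbdd hx, fun hx => hlow x c hx hcA⟩
      have : {ω | Y0 ω ≤ y} = {ω | U0 ω ≤ c} := by
        rw [hpre, hAeq]; rfl
      rw [this]; exact hU0ineq c
    · have hAeq : A = Iio c := by
        ext x
        constructor
        · intro hx
          rcases lt_or_eq_of_le (le_csSup hbdd hx) with hlt | heq
          · exact hlt
          · exact absurd (show c ∈ A by rw [hc, ← heq]; exact hx) hcA
        · exact fun hx => hIio hx
      have hsetY0 : {ω | Y0 ω ≤ y} = {ω | U0 ω < c} := by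
        rw [hpre, hAeq]; rfl
      rw [hsetY0]
      -- monotone approximation from below
      set B : ℕ → Set Ω := fun n => {ω | U0 ω ≤ c - 1 / (n + 1)} with hB
      have hBmeas : ∀ n, MeasurableSet (B n) := fun n =>
        measurableSet_le hmU0 measurable_const
      have hBmono : Monotone B := by
        intro n m hnm ω hω
        have h1 : (1:ℝ) / (m + 1) ≤ 1 / (n + 1) := by
          apply one_div_le_one_div_of_le (by positivity)
          have : (n:ℝ) ≤ m := by exact_mod_cast hnm
          linarith
        simp only [hB, mem_setOf_eq] at hω ⊢
        linarith
      have hkey : ∀ (G : Ω → ℝ≥0∞), Measurable G →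
          ∫⁻ ω in {ω | U0 ω < c}, G ω ∂μ = ⨆ n, ∫⁻ ω in B n, G ω ∂μ := by
        intro G hG
        have hsup : ∀ ω, ({ω | U0 ω < c}).indicator G ω = ⨆ n, (B n).indicator G ω := by
          intro ω
          by_cases hω : U0 ω < c
          · obtain ⟨n, hn⟩ := exists_nat_one_div_lt (sub_pos.mpr hω)
            have hmem : ω ∈ B n := by
              simp only [hB, mem_setOf_eq]; linarith
            have hωmem : ω ∈ {ω | U0 ω < c} := hω
            rw [Set.indicator_of_mem hωmem G]
            refine le_antisymm (le_iSup_of_le n (le_of_eq (Set.indicator_of_mem hmem G).symm)) ?_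
            refine iSup_le fun m => ?_
            exact Set.indicator_le_self' (fun _ _ => zero_le) ω
          · have hωmem : ω ∉ {ω | U0 ω < c} := hω
            have hnot : ∀ n, ω ∉ B n := fun n hmem => by
              simp only [hB, mem_setOf_eq] at hmem
              have h1 : (0:ℝ) < 1 / (n + 1) := by positivity
              push_neg at hω
              linarith
            rw [Set.indicator_of_notMem hωmem G]
            simp [Set.indicator_of_notMem (hnot _) G]
        rw [← lintegral_indicator (measurableSet_lt hmU0 measurable_const) G]
        have : ∫⁻ ω, ({ω | U0 ω < c}).indicator G ω ∂μ
            = ∫⁻ ω, ⨆ n, (B n).indicator G ω ∂μ := lintegral_congr hsup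
        rw [this, lintegral_iSup (fun n => hG.indicator (hBmeas n))
          (fun n m hnm ω' => Set.indicator_le_indicator_of_subset (hBmono hnm)
            (fun _ => zero_le) ω')]
        exact iSup_congr fun n => lintegral_indicator (hBmeas n) G
      rw [hkey W hWm]
      refine iSup_le fun n => ?_
      calc ∫⁻ ω in B n, W ω ∂μ ≤ ∫⁻ ω in B n, Wt ω ∂μ := hU0ineq _
        _ ≤ ∫⁻ ω in {ω | U0 ω < c}, Wt ω ∂μ := by
            refine lintegral_mono_set fun ω hω => ?_
            simp only [hB, mem_setOf_eq] at hω ⊢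
            have h1 : (0:ℝ) < 1 / (n + 1) := by positivity
            linarith
  -- Step 7: conclude
  intro y
  rw [hbridge0w y, hbridge0wt y]
  exact ENNReal.toReal_mono (hWtfin _) (hY0ineq y)


end AuxLemmas

/-- Theorem 3: Model 1 with ξ₀ weakly more noisy than ξ₁ (together with the instrument
exogeneity `Z ⊥ (Y₀, Y₁)`) implies Condition S₁*, and hence (under Assumption D)
Condition S₁.  Conditional-on-(η,Z) distributional equalities are encoded as equalities
of the corresponding joint probabilities; `F_d y t = P[Y_d ≤ y | η = t]` is a conditional
CDF of `Y_d` given `η` with respect to the type distribution `ν = law(η)`. -/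
theorem model1_implies_condS1star_and_condS1
    {Ω : Type*} [MeasurableSpace Ω] (μ : Measure Ω) [IsProbabilityMeasure μ]
    {T : Type*} [MeasurableSpace T]
    (L : ℕ) [NeZero L]
    (U U0 U1 ξ0 ξ1 V : Ω → ℝ) (η : Ω → T) (Z : Ω → Fin L)
    (q : ℕ → ℝ → ℝ) (h : Fin L → T → ℕ) (D : Ω → ℕ) (Y0 Y1 Y : Ω → ℝ)
    (hmU : Measurable U) (hmU0 : Measurable U0) (hmU1 : Measurable U1)
    (hmξ0 : Measurable ξ0) (hmξ1 : Measurable ξ1) (hmV : Measurable V)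
    (hmη : Measurable η) (hmZ : Measurable Z) (hmh : ∀ ℓ, Measurable (h ℓ))
    -- Model 1(i): outcome equation with q(d,·) continuous and strictly increasing,
    -- and selection D = h(Z, η)
    (hq : ∀ d, Continuous (q d) ∧ StrictMono (q d))
    (hD : ∀ ω, D ω = h (Z ω) (η ω))
    (hY0 : ∀ ω, Y0 ω = q 0 (U0 ω)) (hY1 : ∀ ω, Y1 ω = q 1 (U1 ω))
    (hYobs : ∀ ω, Y ω = if D ω = 1 then Y1 ω else Y0 ω)
    -- Model 1(ii): conditional on (η, Z), U_d =ᵈ U + ξ_d with ξ_d ⊥ (η, U), ξ_d has a density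
    (hξ0indep : IndepFun ξ0 (fun ω => (η ω, U ω)) μ)
    (hξ1indep : IndepFun ξ1 (fun ω => (η ω, U ω)) μ)
    (hpdfξ0 : HasPDF ξ0 μ) (hpdfξ1 : HasPDF ξ1 μ)
    (hdist0 : ∀ (u : ℝ) (s : Set T), MeasurableSet s → ∀ ℓ : Fin L,
      pr μ {ω | U0 ω ≤ u ∧ η ω ∈ s ∧ Z ω = ℓ}
        = pr μ {ω | U ω + ξ0 ω ≤ u ∧ η ω ∈ s ∧ Z ω = ℓ})
    (hdist1 : ∀ (u : ℝ) (s : Set T), MeasurableSet s → ∀ ℓ : Fin L,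
      pr μ {ω | U1 ω ≤ u ∧ η ω ∈ s ∧ Z ω = ℓ}
        = pr μ {ω | U ω + ξ1 ω ≤ u ∧ η ω ∈ s ∧ Z ω = ℓ})
    -- Model 1(iii): conditional on Z, ξ₀ =ᵈ ξ₁ + V with V ⊥ ξ₁ and V has a density
    (hVindep : IndepFun V ξ1 μ) (hpdfV : HasPDF V μ)
    (hnoise : ∀ (s : ℝ) (ℓ : Fin L),
      pr μ {ω | ξ0 ω ≤ s ∧ Z ω = ℓ} = pr μ {ω | ξ1 ω + V ω ≤ s ∧ Z ω = ℓ})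
    -- instrument exogeneity (Assumption Z): Z ⊥ (Y₀, Y₁) (jointly with η for Assumption D)
    (hindepZ : IndepFun Z (fun ω => (Y0 ω, Y1 ω, η ω)) μ)
    (hZpos : ∀ ℓ : Fin L, 0 < pr μ {ω | Z ω = ℓ})
    (hposD1Z : ∀ ℓ : Fin L, 0 < pr μ {ω | D ω = 1 ∧ Z ω = ℓ})
    -- the type distribution and the conditional CDFs of Y₀, Y₁ given η
    (ν : Measure T) (hν : ν = μ.map η)
    (F0 F1 : ℝ → T → ℝ)
    (hF0meas : ∀ y, Measurable (F0 y)) (hF1meas : ∀ y, Measurable (F1 y))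
    (hF0 : ∀ (y : ℝ) (s : Set T), MeasurableSet s →
      pr μ {ω | Y0 ω ≤ y ∧ η ω ∈ s} = ∫ t in s, F0 y t ∂ν)
    (hF1 : ∀ (y : ℝ) (s : Set T), MeasurableSet s →
      pr μ {ω | Y1 ω ≤ y ∧ η ω ∈ s} = ∫ t in s, F1 y t ∂ν) :
    -- Condition S₁* holds …
    (∀ w wt : T → ℝ, Measurable w → Measurable wt →
      (∀ t, 0 ≤ w t) → (∀ t, 0 ≤ wt t) →
      (∫ t, w t ∂ν) = 1 → (∫ t, wt t ∂ν) = 1 →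
      (∀ y : ℝ, (∫ t, w t * F1 y t ∂ν) ≤ ∫ t, wt t * F1 y t ∂ν) →
      (∀ y : ℝ, (∫ t, w t * F0 y t ∂ν) ≤ ∫ t, wt t * F0 y t ∂ν)) ∧
    -- … and hence Condition S₁ holds
    (∀ w wt : Fin L → ℝ, (∀ ℓ, 0 ≤ w ℓ) → (∀ ℓ, 0 ≤ wt ℓ) →
      (∑ ℓ, w ℓ) = 1 → (∑ ℓ, wt ℓ) = 1 →
      (∀ y : ℝ, (∑ ℓ, w ℓ * cpr μ {ω | Y1 ω ≤ y} {ω | D ω = 1 ∧ Z ω = ℓ})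
        ≤ ∑ ℓ, wt ℓ * cpr μ {ω | Y1 ω ≤ y} {ω | D ω = 1 ∧ Z ω = ℓ}) →
      (∀ y : ℝ, (∑ ℓ, w ℓ * cpr μ {ω | Y0 ω ≤ y} {ω | D ω = 1 ∧ Z ω = ℓ})
        ≤ ∑ ℓ, wt ℓ * cpr μ {ω | Y0 ω ≤ y} {ω | D ω = 1 ∧ Z ω = ℓ})) := by
  subst hν
  have hmY0 : Measurable Y0 := by
    have : Y0 = fun ω => q 0 (U0 ω) := funext hY0
    rw [this]; exact (hq 0).1.measurable.comp hmU0
  have hmY1 : Measurable Y1 := by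
    have : Y1 = fun ω => q 1 (U1 ω) := funext hY1
    rw [this]; exact (hq 1).1.measurable.comp hmU1
  have hS1star : ∀ w wt : T → ℝ, Measurable w → Measurable wt →
      (∀ t, 0 ≤ w t) → (∀ t, 0 ≤ wt t) →
      (∫ t, w t ∂(μ.map η)) = 1 → (∫ t, wt t ∂(μ.map η)) = 1 →
      (∀ y : ℝ, (∫ t, w t * F1 y t ∂(μ.map η)) ≤ ∫ t, wt t * F1 y t ∂(μ.map η)) →
      (∀ y : ℝ, (∫ t, w t * F0 y t ∂(μ.map η)) ≤ ∫ t, wt t * F0 y t ∂(μ.map η)) :=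
    fun w wt hwm hwtm hw0 hwt0 hwi hwti hyp =>
      core_S1star μ L U U0 U1 ξ0 ξ1 V η Z q Y0 Y1 hmU hmU0 hmU1 hmξ0 hmξ1 hmV hmη hmZ
        hq hY0 hY1 hξ0indep hξ1indep hdist0 hdist1 hVindep hnoise F0 F1 hF0meas hF1meas
        hF0 hF1 w wt hwm hwtm hw0 hwt0 hwi hwti hyp
  refine ⟨hS1star, ?_⟩
  -- Part 2: Condition S₁
  intro w wt hw0 hwt0 hwsum hwtsum hyp
  set sσ : Fin L → Set T := fun ℓ => h ℓ ⁻¹' {1} with hsσdef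
  have hsσ : ∀ ℓ, MeasurableSet (sσ ℓ) := fun ℓ => hmh ℓ (measurableSet_singleton 1)
  have hDiff : ∀ (ω : Ω) (ℓ : Fin L), (D ω = 1 ∧ Z ω = ℓ) ↔ (Z ω = ℓ ∧ η ω ∈ sσ ℓ) := by
    intro ω ℓ
    rw [hD ω]
    constructor
    · rintro ⟨h1, h2⟩
      refine ⟨h2, ?_⟩
      rw [h2] at h1
      exact h1
    · rintro ⟨h2, h1⟩
      exact ⟨by rw [h2]; exact h1, h2⟩
  set G : Ω → ℝ × ℝ × T := fun ω => (Y0 ω, Y1 ω, η ω) with hG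
  have hindep' := indepFun_iff_measure_inter_preimage_eq_mul.mp hindepZ
  -- numerator factorizations
  have hnum1 : ∀ (y : ℝ) (ℓ : Fin L),
      μ ({ω | Y1 ω ≤ y} ∩ {ω | D ω = 1 ∧ Z ω = ℓ})
        = μ (Z ⁻¹' {ℓ}) * μ {ω | Y1 ω ≤ y ∧ η ω ∈ sσ ℓ} := by
    intro y ℓ
    have e2 : G ⁻¹' ((univ : Set ℝ) ×ˢ (Iic y ×ˢ sσ ℓ)) = {ω | Y1 ω ≤ y ∧ η ω ∈ sσ ℓ} := by
      ext ω
      simp [hG, Set.mem_prod]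
    have e : {ω | Y1 ω ≤ y} ∩ {ω | D ω = 1 ∧ Z ω = ℓ}
        = Z ⁻¹' {ℓ} ∩ G ⁻¹' ((univ : Set ℝ) ×ˢ (Iic y ×ˢ sσ ℓ)) := by
      rw [e2]
      ext ω
      simp only [mem_inter_iff, mem_setOf_eq, mem_preimage, mem_singleton_iff]
      rw [hDiff ω ℓ]
      tauto
    rw [e, hindep' {ℓ} _ (measurableSet_singleton ℓ)
      (MeasurableSet.univ.prod (measurableSet_Iic.prod (hsσ ℓ))), e2]
  have hnum0 : ∀ (y : ℝ) (ℓ : Fin L),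
      μ ({ω | Y0 ω ≤ y} ∩ {ω | D ω = 1 ∧ Z ω = ℓ})
        = μ (Z ⁻¹' {ℓ}) * μ {ω | Y0 ω ≤ y ∧ η ω ∈ sσ ℓ} := by
    intro y ℓ
    have e2 : G ⁻¹' ((Iic y : Set ℝ) ×ˢ ((univ : Set ℝ) ×ˢ sσ ℓ)) = {ω | Y0 ω ≤ y ∧ η ω ∈ sσ ℓ} := by
      ext ω
      simp [hG, Set.mem_prod]
    have e : {ω | Y0 ω ≤ y} ∩ {ω | D ω = 1 ∧ Z ω = ℓ}
        = Z ⁻¹' {ℓ} ∩ G ⁻¹' ((Iic y : Set ℝ) ×ˢ ((univ : Set ℝ) ×ˢ sσ ℓ)) := by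
      rw [e2]
      ext ω
      simp only [mem_inter_iff, mem_setOf_eq, mem_preimage, mem_singleton_iff]
      rw [hDiff ω ℓ]
      tauto
    rw [e, hindep' {ℓ} _ (measurableSet_singleton ℓ)
      (measurableSet_Iic.prod (MeasurableSet.univ.prod (hsσ ℓ))), e2]
  have hprD : ∀ ℓ : Fin L, μ {ω | D ω = 1 ∧ Z ω = ℓ} = μ (Z ⁻¹' {ℓ}) * μ (η ⁻¹' sσ ℓ) := by
    intro ℓ
    have e2 : G ⁻¹' ((univ : Set ℝ) ×ˢ ((univ : Set ℝ) ×ˢ sσ ℓ)) = η ⁻¹' sσ ℓ := by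
      ext ω
      simp [hG, Set.mem_prod]
    have e : {ω | D ω = 1 ∧ Z ω = ℓ}
        = Z ⁻¹' {ℓ} ∩ G ⁻¹' ((univ : Set ℝ) ×ˢ ((univ : Set ℝ) ×ˢ sσ ℓ)) := by
      rw [e2]
      ext ω
      simp only [mem_inter_iff, mem_setOf_eq, mem_preimage, mem_singleton_iff]
      exact hDiff ω ℓ
    rw [e, hindep' {ℓ} _ (measurableSet_singleton ℓ)
      (MeasurableSet.univ.prod (MeasurableSet.univ.prod (hsσ ℓ))), e2]
  -- real-valued versions
  have hprDreal : ∀ ℓ : Fin L,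
      pr μ {ω | D ω = 1 ∧ Z ω = ℓ} = pr μ {ω | Z ω = ℓ} * pr μ (η ⁻¹' sσ ℓ) := by
    intro ℓ
    unfold pr
    rw [hprD ℓ, ENNReal.toReal_mul]
    rfl
  set c : Fin L → ℝ := fun ℓ => pr μ {ω | Z ω = ℓ} / pr μ {ω | D ω = 1 ∧ Z ω = ℓ} with hcdef
  have hc0 : ∀ ℓ, 0 ≤ c ℓ := fun ℓ => div_nonneg ENNReal.toReal_nonneg ENNReal.toReal_nonneg
  have hprDne : ∀ ℓ, pr μ {ω | D ω = 1 ∧ Z ω = ℓ} ≠ 0 := fun ℓ => (hposD1Z ℓ).ne'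
  have hone : ∀ ℓ, c ℓ * pr μ (η ⁻¹' sσ ℓ) = 1 := by
    intro ℓ
    rw [hcdef]
    rw [div_mul_eq_mul_div, ← hprDreal ℓ]
    exact div_self (hprDne ℓ)
  -- ν(sσ ℓ) in terms of pr
  have hνs : ∀ ℓ, ((μ.map η) (sσ ℓ)).toReal = pr μ (η ⁻¹' sσ ℓ) := by
    intro ℓ
    rw [Measure.map_apply hmη (hsσ ℓ)]
    rfl
  -- cpr bridging
  have hcpr1 : ∀ (y : ℝ) (ℓ : Fin L),
      cpr μ {ω | Y1 ω ≤ y} {ω | D ω = 1 ∧ Z ω = ℓ}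
        = c ℓ * ∫ t in sσ ℓ, F1 y t ∂(μ.map η) := by
    intro y ℓ
    unfold cpr pr
    rw [hnum1 y ℓ, ENNReal.toReal_mul]
    rw [show (μ {ω | Y1 ω ≤ y ∧ η ω ∈ sσ ℓ}).toReal = ∫ t in sσ ℓ, F1 y t ∂(μ.map η) from
      hF1 y (sσ ℓ) (hsσ ℓ)]
    rw [mul_div_right_comm]
    rfl
  have hcpr0 : ∀ (y : ℝ) (ℓ : Fin L),
      cpr μ {ω | Y0 ω ≤ y} {ω | D ω = 1 ∧ Z ω = ℓ}
        = c ℓ * ∫ t in sσ ℓ, F0 y t ∂(μ.map η) := by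
    intro y ℓ
    unfold cpr pr
    rw [hnum0 y ℓ, ENNReal.toReal_mul]
    rw [show (μ {ω | Y0 ω ≤ y ∧ η ω ∈ sσ ℓ}).toReal = ∫ t in sσ ℓ, F0 y t ∂(μ.map η) from
      hF0 y (sσ ℓ) (hsσ ℓ)]
    rw [mul_div_right_comm]
    rfl
  -- a.e. bounds for the conditional CDFs
  haveI : IsProbabilityMeasure (μ.map η) := Measure.isProbabilityMeasure_map hmη.aemeasurable
  have hF1ae : ∀ y, (0 ≤ᵐ[μ.map η] F1 y) ∧ (F1 y ≤ᵐ[μ.map η] 1) := by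
    intro y
    constructor
    · refine aux_ae_nonneg (hF1meas y) fun s hs => ?_
      rw [← hF1 y s hs]
      exact ENNReal.toReal_nonneg
    · refine aux_ae_le_one (hF1meas y) fun s hs => ?_
      rw [← hF1 y s hs]
      refine ENNReal.toReal_mono (measure_ne_top _ _) ?_
      rw [Measure.map_apply hmη hs]
      exact measure_mono fun ω hω => hω.2
  have hF0ae : ∀ y, (0 ≤ᵐ[μ.map η] F0 y) ∧ (F0 y ≤ᵐ[μ.map η] 1) := by
    intro y
    constructor
    · refine aux_ae_nonneg (hF0meas y) fun s hs => ?_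
      rw [← hF0 y s hs]
      exact ENNReal.toReal_nonneg
    · refine aux_ae_le_one (hF0meas y) fun s hs => ?_
      rw [← hF0 y s hs]
      refine ENNReal.toReal_mono (measure_ne_top _ _) ?_
      rw [Measure.map_apply hmη hs]
      exact measure_mono fun ω hω => hω.2
  -- the mixture weight pieces
  set g : Fin L → T → ℝ := fun ℓ => (sσ ℓ).indicator (fun _ => c ℓ) with hgdef
  have hgmeas : ∀ ℓ, Measurable (g ℓ) := fun ℓ => measurable_const.indicator (hsσ ℓ)
  have hg0 : ∀ ℓ t, 0 ≤ g ℓ t := fun ℓ t => Set.indicator_nonneg (fun _ _ => hc0 ℓ) t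
  have hgint : ∀ ℓ, Integrable (g ℓ) (μ.map η) := fun ℓ =>
    (integrable_const (c ℓ)).indicator (hsσ ℓ)
  have hgtot : ∀ ℓ, ∫ t, g ℓ t ∂(μ.map η) = 1 := by
    intro ℓ
    have : ∫ t, g ℓ t ∂(μ.map η) = ∫ t in sσ ℓ, (fun _ => c ℓ) t ∂(μ.map η) :=
      integral_indicator (hsσ ℓ)
    rw [this, setIntegral_const, smul_eq_mul, mul_comm, measureReal_def, hνs ℓ]
    exact hone ℓ
  have hgF : ∀ (F : ℝ → T → ℝ), (∀ y, Measurable (F y)) →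
      (∀ y, (0 ≤ᵐ[μ.map η] F y) ∧ (F y ≤ᵐ[μ.map η] 1)) →
      ∀ (y : ℝ) (ℓ : Fin L),
      (Integrable (fun t => g ℓ t * F y t) (μ.map η)) ∧
      ∫ t, g ℓ t * F y t ∂(μ.map η) = c ℓ * ∫ t in sσ ℓ, F y t ∂(μ.map η) := by
    intro F hFm hFae y ℓ
    have hptw : (fun t => g ℓ t * F y t) = (sσ ℓ).indicator (fun t => c ℓ * F y t) := by
      funext t
      by_cases ht : t ∈ sσ ℓ
      · simp only [hgdef, Set.indicator_of_mem ht]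
      · simp only [hgdef, Set.indicator_of_notMem ht, zero_mul]
    constructor
    · refine Integrable.mono' (integrable_const (c ℓ))
        ((hgmeas ℓ).mul (hFm y)).aestronglyMeasurable ?_
      filter_upwards [(hFae y).1, (hFae y).2] with t ht0 ht1
      simp only [Pi.zero_apply] at ht0
      simp only [Pi.one_apply] at ht1
      rw [Real.norm_eq_abs]
      by_cases ht : t ∈ sσ ℓ
      · simp only [hgdef, Set.indicator_of_mem ht]
        rw [abs_mul, abs_of_nonneg (hc0 ℓ), abs_of_nonneg ht0]
        nlinarith [hc0 ℓ]
      · simp only [hgdef, Set.indicator_of_notMem ht, zero_mul, abs_zero]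
        exact hc0 ℓ
    · rw [hptw]
      have : ∫ t, (sσ ℓ).indicator (fun t => c ℓ * F y t) t ∂(μ.map η)
          = ∫ t in sσ ℓ, c ℓ * F y t ∂(μ.map η) := integral_indicator (hsσ ℓ)
      rw [this, integral_const_mul]
  have hsumid : ∀ (F : ℝ → T → ℝ), (∀ y, Measurable (F y)) →
      (∀ y, (0 ≤ᵐ[μ.map η] F y) ∧ (F y ≤ᵐ[μ.map η] 1)) →
      ∀ (v : Fin L → ℝ), ∀ y : ℝ,
      ∫ t, (∑ ℓ, v ℓ * g ℓ t) * F y t ∂(μ.map η)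
        = ∑ ℓ, v ℓ * (c ℓ * ∫ t in sσ ℓ, F y t ∂(μ.map η)) := by
    intro F hFm hFae v y
    have hptw : (fun t => (∑ ℓ, v ℓ * g ℓ t) * F y t)
        = fun t => ∑ ℓ, v ℓ * (g ℓ t * F y t) := by
      funext t
      rw [Finset.sum_mul]
      exact Finset.sum_congr rfl fun ℓ _ => mul_assoc _ _ _
    calc ∫ t, (∑ ℓ, v ℓ * g ℓ t) * F y t ∂(μ.map η)
        = ∫ t, ∑ ℓ, v ℓ * (g ℓ t * F y t) ∂(μ.map η) := by rw [hptw]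
      _ = ∑ ℓ, ∫ t, v ℓ * (g ℓ t * F y t) ∂(μ.map η) :=
          integral_finset_sum _ (fun ℓ _ => ((hgF F hFm hFae y ℓ).1.const_mul (v ℓ)))
      _ = ∑ ℓ, v ℓ * (c ℓ * ∫ t in sσ ℓ, F y t ∂(μ.map η)) := by
          refine Finset.sum_congr rfl fun ℓ _ => ?_
          rw [integral_const_mul, (hgF F hFm hFae y ℓ).2]
  -- measurability / nonnegativity / total mass of the mixtures
  have hwbarm : Measurable (fun t => ∑ ℓ, w ℓ * g ℓ t) :=
    Finset.measurable_sum _ fun ℓ _ => (hgmeas ℓ).const_mul (w ℓ)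
  have hwtbarm : Measurable (fun t => ∑ ℓ, wt ℓ * g ℓ t) :=
    Finset.measurable_sum _ fun ℓ _ => (hgmeas ℓ).const_mul (wt ℓ)
  have hwbar0 : ∀ t, 0 ≤ ∑ ℓ, w ℓ * g ℓ t := fun t =>
    Finset.sum_nonneg fun ℓ _ => mul_nonneg (hw0 ℓ) (hg0 ℓ t)
  have hwtbar0 : ∀ t, 0 ≤ ∑ ℓ, wt ℓ * g ℓ t := fun t =>
    Finset.sum_nonneg fun ℓ _ => mul_nonneg (hwt0 ℓ) (hg0 ℓ t)
  have hwbarint : ∫ t, (∑ ℓ, w ℓ * g ℓ t) ∂(μ.map η) = 1 := by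
    rw [integral_finset_sum _ (fun ℓ _ => (hgint ℓ).const_mul (w ℓ))]
    calc ∑ ℓ, ∫ t, w ℓ * g ℓ t ∂(μ.map η) = ∑ ℓ, w ℓ * 1 := by
          refine Finset.sum_congr rfl fun ℓ _ => ?_
          rw [integral_const_mul, hgtot ℓ]
      _ = 1 := by simp [hwsum]
  have hwtbarint : ∫ t, (∑ ℓ, wt ℓ * g ℓ t) ∂(μ.map η) = 1 := by
    rw [integral_finset_sum _ (fun ℓ _ => (hgint ℓ).const_mul (wt ℓ))]
    calc ∑ ℓ, ∫ t, wt ℓ * g ℓ t ∂(μ.map η) = ∑ ℓ, wt ℓ * 1 := by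
          refine Finset.sum_congr rfl fun ℓ _ => ?_
          rw [integral_const_mul, hgtot ℓ]
      _ = 1 := by simp [hwtsum]
  -- transport the premise
  have hyp' : ∀ y : ℝ, (∫ t, (∑ ℓ, w ℓ * g ℓ t) * F1 y t ∂(μ.map η))
      ≤ ∫ t, (∑ ℓ, wt ℓ * g ℓ t) * F1 y t ∂(μ.map η) := by
    intro y
    rw [hsumid F1 hF1meas hF1ae w y, hsumid F1 hF1meas hF1ae wt y]
    have e1 : ∀ v : Fin L → ℝ, ∑ ℓ, v ℓ * (c ℓ * ∫ t in sσ ℓ, F1 y t ∂(μ.map η))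
        = ∑ ℓ, v ℓ * cpr μ {ω | Y1 ω ≤ y} {ω | D ω = 1 ∧ Z ω = ℓ} := by
      intro v
      exact Finset.sum_congr rfl fun ℓ _ => by rw [hcpr1 y ℓ]
    rw [e1 w, e1 wt]
    exact hyp y
  have main := hS1star (fun t => ∑ ℓ, w ℓ * g ℓ t) (fun t => ∑ ℓ, wt ℓ * g ℓ t)
    hwbarm hwtbarm hwbar0 hwtbar0 hwbarint hwtbarint hyp'
  intro y
  have e0 : ∀ v : Fin L → ℝ, ∑ ℓ, v ℓ * cpr μ {ω | Y0 ω ≤ y} {ω | D ω = 1 ∧ Z ω = ℓ}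
      = ∫ t, (∑ ℓ, v ℓ * g ℓ t) * F0 y t ∂(μ.map η) := by
    intro v
    rw [hsumid F0 hF0meas hF0ae v y]
    exact Finset.sum_congr rfl fun ℓ _ => by rw [hcpr0 y ℓ]
  rw [e0 w, e0 wt]
  exact main y
end
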